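/- arXiv:2004.08259 — 10 statements merged into one kernel-verified Lean document; each statement's English description precedes it below -/
import Mathlib

section
/- Let X ⊆ ℝ^d be a convex set, fix x_k ∈ X, and let m̃ : ℝ^d → ℝ be a differentiable, strictly convex function with m̃(x_k) = f(x_k) and ∇m̃(x_k) = ∇f(x_k). Assume that for every x ∈ X, if L(x_k, x) ⊆ S(x_k) and m̃(x) ≤ m̃(x_k), then f(x) ≤ m̃(x). Then every x ∈ X with m̃(x) ≤ m̃(x_k) satisfies both L(x_k, x) ⊆ S(x_k) and f(x) ≤ m̃(x). -/
open scoped RealInnerProductSpace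

/-- The gradient of f(x) = (1/2)‖F(x)‖², namely ∇f(x) = J(x)ᵀ F(x). -/
noncomputable def gradf {d n : ℕ}
    (F : EuclideanSpace ℝ (Fin d) → EuclideanSpace ℝ (Fin n))
    (x : EuclideanSpace ℝ (Fin d)) : EuclideanSpace ℝ (Fin d) :=
  ContinuousLinearMap.adjoint (fderiv ℝ F x) (F x)

set_option maxHeartbeats 1600000 in
/-- Technical lemma for majorization-minimization under a
Lipschitz-type assumption only on a sublevel set. -/
theorem stmt_5 {d n : ℕ}
    (F : EuclideanSpace ℝ (Fin d) → EuclideanSpace ℝ (Fin n))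
    (hF : ContDiff ℝ 1 F)
    (f : EuclideanSpace ℝ (Fin d) → ℝ)
    (hf : ∀ x, f x = (1 / 2) * ‖F x‖ ^ 2)
    (X : Set (EuclideanSpace ℝ (Fin d))) (hXconvex : Convex ℝ X)
    (xk : EuclideanSpace ℝ (Fin d)) (hxk : xk ∈ X)
    (mt : EuclideanSpace ℝ (Fin d) → ℝ)
    (hmtdiff : Differentiable ℝ mt)
    (hmtconv : StrictConvexOn ℝ Set.univ mt)
    (hmteq : mt xk = f xk)
    (hmtgrad : gradient mt xk = gradf F xk)
    (hImp : ∀ x ∈ X, segment ℝ xk x ⊆ {z | f z ≤ f xk} → mt x ≤ mt xk →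
      f x ≤ mt x) :
    ∀ x ∈ X, mt x ≤ mt xk →
      segment ℝ xk x ⊆ {z | f z ≤ f xk} ∧ f x ≤ mt x := by
  intro x hxX hmx
  have hFc : Continuous F := hF.continuous
  have hfeq : f = fun y => (1 / 2 : ℝ) * ‖F y‖ ^ 2 := funext hf
  have hfc : Continuous f := by rw [hfeq]; continuity
  rcases eq_or_ne x xk with rfl | hne
  · constructor
    · intro z hz
      rw [segment_same] at hz
      simp only [Set.mem_singleton_iff] at hz
      simp [hz]
    · rw [hmteq]
  set v := x - xk with hv
  set γ : ℝ → EuclideanSpace ℝ (Fin d) := fun θ => xk + θ • v with hγ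
  have hγ0 : γ 0 = xk := by simp [hγ]
  have hγd : ∀ θ : ℝ, HasDerivAt γ v θ := fun θ => by
    show HasDerivAt (fun θ => xk + θ • v) v θ
    simpa using ((hasDerivAt_id θ).smul_const v).const_add xk
  set φ : ℝ → ℝ := fun θ => f (γ θ) with hφ
  have hγc : Continuous γ := by fun_prop
  have hφc : Continuous φ := hfc.comp hγc
  have hφ0 : φ 0 = f xk := by rw [hφ]; simp [hγ0]
  -- derivative of f at xk
  have hJ : HasFDerivAt F (fderiv ℝ F xk) xk := (hF.differentiable one_ne_zero xk).hasFDerivAt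
  set J := fderiv ℝ F xk with hJdef
  have hinner : HasFDerivAt (fun y => ⟪F y, F y⟫)
      ((fderivInnerCLM ℝ (F xk, F xk)).comp (J.prod J)) xk := hJ.inner ℝ hJ
  have hfd : HasFDerivAt f
      ((1 / 2 : ℝ) • ((fderivInnerCLM ℝ (F xk, F xk)).comp (J.prod J))) xk := by
    rw [hfeq]
    have : (fun y => (1 / 2 : ℝ) * ‖F y‖ ^ 2) = fun y => (1 / 2 : ℝ) * ⟪F y, F y⟫ := by
      funext y; rw [real_inner_self_eq_norm_sq]
    rw [this]
    exact hinner.const_smul (1 / 2 : ℝ)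
  have happly : ((1 / 2 : ℝ) • ((fderivInnerCLM ℝ (F xk, F xk)).comp (J.prod J))) v
      = ⟪gradf F xk, v⟫ := by
    simp only [ContinuousLinearMap.smul_apply, ContinuousLinearMap.comp_apply,
      ContinuousLinearMap.prod_apply, fderivInnerCLM_apply, smul_eq_mul]
    rw [gradf, ContinuousLinearMap.adjoint_inner_left]
    rw [real_inner_comm (J v) (F xk)]
    ring
  have hφ' : HasDerivAt φ ⟪gradf F xk, v⟫ 0 := by
    have h := hfd.comp_hasDerivAt_of_eq 0 (hγd 0) hγ0.symm
    rw [happly] at h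
    exact h
  -- derivative of mt along γ at 0
  have hmtfd : HasFDerivAt mt (InnerProductSpace.toDual ℝ _ (gradient mt xk)) xk :=
    ((hmtdiff xk).hasGradientAt).hasFDerivAt
  set ψ : ℝ → ℝ := fun θ => mt (γ θ) with hψ
  have hψ' : HasDerivAt ψ ⟪gradient mt xk, v⟫ 0 := by
    have h := hmtfd.comp_hasDerivAt_of_eq 0 (hγd 0) hγ0.symm
    rwa [InnerProductSpace.toDual_apply_apply] at h
  -- convexity of ψ
  have hlin : γ = ⇑(AffineMap.lineMap xk x : ℝ →ᵃ[ℝ] EuclideanSpace ℝ (Fin d)) := by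
    funext θ
    rw [hγ]
    simp only [AffineMap.lineMap_apply, vsub_eq_sub, vadd_eq_add, hv]
    abel
  have hψconv : ConvexOn ℝ Set.univ ψ := by
    have h := hmtconv.convexOn.comp_affineMap (AffineMap.lineMap xk x : ℝ →ᵃ[ℝ] _)
    simp only [Set.preimage_univ] at h
    rw [hψ, hlin]
    exact h
  -- strict decrease of mt along the segment
  have hstrict : ∀ t : ℝ, 0 < t → t < 1 → mt (γ t) < mt xk := by
    intro t ht0 ht1
    have h := hmtconv.2 (Set.mem_univ xk) (Set.mem_univ x) hne.symm
      (by linarith : (0:ℝ) < 1 - t) ht0 (by ring)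
    have hγt : γ t = (1 - t) • xk + t • x := by
      rw [hγ, hv]
      simp only [smul_sub, sub_smul, one_smul]
      abel
    rw [hγt]
    simp only [smul_eq_mul] at h
    nlinarith [h, mul_nonneg ht0.le (sub_nonneg.mpr hmx)]
  have hψ0 : ψ 0 = mt xk := by rw [hψ]; simp [hγ0]
  have hψhalf : ψ (1 / 2) < mt xk := hstrict _ (by norm_num) (by norm_num)
  have hslope : ⟪gradient mt xk, v⟫ ≤ slope ψ 0 (1 / 2) :=
    hψconv.le_slope_of_hasDerivWithinAt (Set.mem_univ 0) (Set.mem_univ (1 / 2))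
      (by norm_num) hψ'.hasDerivWithinAt
  have hneg : ⟪gradf F xk, v⟫ < (0:ℝ) := by
    rw [← hmtgrad]
    have hs : slope ψ 0 (1 / 2) < 0 := by
      rw [slope_def_field]
      have : ψ (1/2) - ψ 0 < 0 := by rw [hψ0]; linarith
      have h2 : ((1:ℝ)/2 - 0) = 1/2 := by norm_num
      rw [h2]
      linarith [div_neg_of_neg_of_pos this (by norm_num : (0:ℝ) < 1/2)]
    linarith
  -- sup argument
  set A : Set ℝ := {θ | θ ∈ Set.Icc (0:ℝ) 1 ∧ ∀ s ∈ Set.Icc (0:ℝ) θ, φ s ≤ f xk} with hA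
  have h0A : (0:ℝ) ∈ A := by
    refine ⟨⟨le_refl 0, zero_le_one⟩, fun s hs => ?_⟩
    have : s = 0 := le_antisymm hs.2 hs.1
    rw [this, hφ0]
  have hAne : A.Nonempty := ⟨0, h0A⟩
  have hbdd : BddAbove A := ⟨1, fun θ hθ => hθ.1.2⟩
  set c := sSup A with hc
  have hc0 : 0 ≤ c := le_csSup hbdd h0A
  have hc1 : c ≤ 1 := csSup_le hAne (fun θ hθ => hθ.1.2)
  have hltc : ∀ s : ℝ, 0 ≤ s → s < c → φ s ≤ f xk := by
    intro s hs0 hsc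
    obtain ⟨θ, hθA, hsθ⟩ := exists_lt_of_lt_csSup hAne hsc
    exact hθA.2 s ⟨hs0, hsθ.le⟩
  have hcmem : ∀ s ∈ Set.Icc (0:ℝ) c, φ s ≤ f xk := by
    intro s hs
    rcases lt_or_eq_of_le hs.2 with h | h
    · exact hltc s hs.1 h
    · rw [h]
      rcases eq_or_lt_of_le hc0 with h0 | h0
      · rw [← h0, hφ0]
      · have htend : Filter.Tendsto φ (nhdsWithin c (Set.Iio c)) (nhds (φ c)) :=
          (hφc.continuousAt).continuousWithinAt
        refine le_of_tendsto htend ?_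
        filter_upwards [Ioo_mem_nhdsLT_of_mem (⟨h0, le_refl c⟩ : c ∈ Set.Ioc (0:ℝ) c)]
          with t ht
        exact hltc t ht.1.le ht.2
  have hceq : c = 1 := by
    by_contra hcne
    have hclt : c < 1 := lt_of_le_of_ne hc1 hcne
    rcases eq_or_lt_of_le hc0 with h0 | h0
    · -- c = 0: use negative derivative
      have htend := hasDerivAt_iff_tendsto_slope.mp hφ'
      have hev : ∀ᶠ t in nhdsWithin (0:ℝ) {(0:ℝ)}ᶜ, slope φ 0 t < 0 :=
        htend.eventually_lt_const hneg
      rw [Filter.eventually_iff, mem_nhdsWithin] at hev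
      obtain ⟨U, hUo, hU0, hUsub⟩ := hev
      obtain ⟨δ, hδ0, hδball⟩ := Metric.isOpen_iff.mp hUo 0 hU0
      set θ0 := min (δ / 2) 1 with hθ0
      have hθ0pos : 0 < θ0 := lt_min (by linarith) one_pos
      have hθ0A : θ0 ∈ A := by
        refine ⟨⟨hθ0pos.le, min_le_right _ _⟩, fun s hs => ?_⟩
        rcases eq_or_lt_of_le hs.1 with hs0 | hs0
        · rw [← hs0, hφ0]
        · have hmemU : s ∈ U := by
            apply hδball
            rw [Metric.mem_ball, Real.dist_eq, sub_zero, abs_of_pos hs0]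
            have h1 : s ≤ θ0 := hs.2
            have h2 : θ0 ≤ δ / 2 := min_le_left _ _
            linarith
          have hslt : slope φ 0 s < 0 := hUsub ⟨hmemU, ne_of_gt hs0⟩
          rw [slope_def_field, sub_zero] at hslt
          have hnum : φ s - φ 0 < 0 := by
            by_contra hge
            push_neg at hge
            have := div_nonneg hge hs0.le
            linarith
          linarith [hφ0.symm.le, hnum]
      have hle : θ0 ≤ c := le_csSup hbdd hθ0A
      rw [← h0] at hle
      linarith
    · -- 0 < c < 1
      set y := γ c with hy
      have hyrep : y = (1 - c) • xk + c • x := by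
        rw [hy, hγ, hv]
        simp only [smul_sub, sub_smul, one_smul]
        abel
      have hyX : y ∈ X := by
        rw [hyrep]
        exact hXconvex hxk hxX (by linarith) hc0 (by ring)
      have hyseg : segment ℝ xk y ⊆ {z | f z ≤ f xk} := by
        intro z hz
        rw [segment_eq_image'] at hz
        obtain ⟨t, ht, rfl⟩ := hz
        have hzrep : xk + t • (y - xk) = γ (t * c) := by
          rw [hy, hγ]
          simp only [add_sub_cancel_left, smul_smul]
        show f (xk + t • (y - xk)) ≤ f xk
        rw [hzrep]
        exact hcmem (t * c) ⟨mul_nonneg ht.1 hc0, by nlinarith [ht.2]⟩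
      have hmty : mt y < mt xk := hstrict c h0 hclt
      have hfy : f y ≤ mt y := hImp y hyX hyseg hmty.le
      have hφclt : φ c < f xk := by
        rw [hφ]
        calc f (γ c) ≤ mt y := hfy
        _ < mt xk := hmty
        _ = f xk := hmteq
      have hev : ∀ᶠ t in nhds c, φ t < f xk :=
        (hφc.continuousAt).eventually_lt_const hφclt
      obtain ⟨δ, hδ0, hδ⟩ := Metric.eventually_nhds_iff.mp hev
      set θ1 := min (c + δ / 2) 1 with hθ1
      have hθ1c : c < θ1 := lt_min (by linarith) hclt
      have hθ1A : θ1 ∈ A := by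
        refine ⟨⟨by linarith, min_le_right _ _⟩, fun s hs => ?_⟩
        rcases le_or_gt s c with hsc | hsc
        · exact hcmem s ⟨hs.1, hsc⟩
        · have hdist : dist s c < δ := by
            rw [Real.dist_eq, abs_of_pos (by linarith)]
            have h1 : s ≤ θ1 := hs.2
            have h2 : θ1 ≤ c + δ / 2 := min_le_left _ _
            linarith
          exact (hδ hdist).le
      linarith [le_csSup hbdd hθ1A]
  have hseg : segment ℝ xk x ⊆ {z | f z ≤ f xk} := by
    intro z hz
    rw [segment_eq_image'] at hz
    obtain ⟨t, ht, rfl⟩ := hz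
    show f (γ t) ≤ f xk
    exact hcmem t (by rw [← hceq] at ht; exact ht)
  exact ⟨hseg, hImp x hxX hseg hmx⟩
end

section
/- Fix x_k ∈ C and a constant L_f > 0 such that ‖∇f(y) − ∇f(x)‖ ≤ L_f‖y − x‖ for all x, y ∈ C with L(x, y) ⊆ S(x_k). Then for every η ≥ L_f, the projected gradient point satisfies L(x_k, P_η(x_k)) ⊆ S(x_k) and f(P_η(x_k)) − f(x_k) ≤ −D_η(x_k). -/
open scoped RealInnerProductSpace

/-- Derivative of `f (a + s • v)` is `⟪gradf F (a + t • v), v⟫`. -/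
lemma hasDerivAt_phi_aux {d n : ℕ}
    (F : EuclideanSpace ℝ (Fin d) → EuclideanSpace ℝ (Fin n))
    (hF : ContDiff ℝ 1 F)
    (f : EuclideanSpace ℝ (Fin d) → ℝ)
    (hf : ∀ x, f x = (1 / 2) * ‖F x‖ ^ 2)
    (a v : EuclideanSpace ℝ (Fin d)) (t : ℝ) :
    HasDerivAt (fun s : ℝ => f (a + s • v)) ⟪gradf F (a + t • v), v⟫ t := by
  set x := a + t • v with hx
  have hγ : HasDerivAt (fun s : ℝ => a + s • v) v t := by
    simpa using ((hasDerivAt_id t).smul_const v).const_add a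
  have hJ : HasFDerivAt F (fderiv ℝ F x) x :=
    ((hF.differentiable one_ne_zero) x).hasFDerivAt
  have hG : HasDerivAt (fun s : ℝ => F (a + s • v)) (fderiv ℝ F x v) t :=
    hJ.comp_hasDerivAt t hγ
  have h2 : HasDerivAt (fun s : ℝ => ⟪F (a + s • v), F (a + s • v)⟫)
      (⟪F x, fderiv ℝ F x v⟫ + ⟪fderiv ℝ F x v, F x⟫) t := hG.inner ℝ hG
  have h3 := h2.const_mul (1/2 : ℝ)
  have hfn : (fun s : ℝ => f (a + s • v)) =
      fun s : ℝ => (1/2 : ℝ) * ⟪F (a + s • v), F (a + s • v)⟫ := by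
    funext s; rw [hf, real_inner_self_eq_norm_sq]
  have hval : (1/2 : ℝ) * (⟪F x, fderiv ℝ F x v⟫ + ⟪fderiv ℝ F x v, F x⟫)
      = ⟪gradf F x, v⟫ := by
    rw [gradf, ContinuousLinearMap.adjoint_inner_left]
    rw [real_inner_comm (fderiv ℝ F x v) (F x)]
    ring
  rw [hfn, ← hval]
  exact h3

/-- Quadratic upper bound from a linear bound on the derivative. -/
lemma descent_aux (φ φ' : ℝ → ℝ) (θ a L : ℝ) (hθ : 0 ≤ θ)
    (hd : ∀ t : ℝ, HasDerivAt φ (φ' t) t)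
    (hb : ∀ t ∈ Set.Icc (0:ℝ) θ, φ' t ≤ a + L * t) :
    φ θ ≤ φ 0 + a * θ + L * θ ^ 2 / 2 := by
  set ψ : ℝ → ℝ := fun t => φ t - (a * t + L * t ^ 2 / 2) with hψ
  have hψd : ∀ t : ℝ, HasDerivAt ψ (φ' t - (a + L * t)) t := by
    intro t
    have h1 : HasDerivAt (fun t : ℝ => a * t + L * t ^ 2 / 2) (a + L * t) t := by
      have h2 : HasDerivAt (fun t : ℝ => a * t) a t := by
        simpa using (hasDerivAt_id t).const_mul a
      have h3 : HasDerivAt (fun t : ℝ => L * t ^ 2 / 2) (L * t) t := by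
        have := ((hasDerivAt_pow 2 t).const_mul L).div_const 2
        exact this.congr_deriv (by rw [show (2:ℕ) - 1 = 1 from rfl, pow_one]; push_cast; ring)
      exact h2.add h3
    exact (hd t).sub h1
  have hanti : AntitoneOn ψ (Set.Icc 0 θ) := by
    apply antitoneOn_of_deriv_nonpos (convex_Icc 0 θ)
    · exact (fun t _ => ((hψd t).continuousAt).continuousWithinAt)
    · intro t ht
      exact (hψd t).differentiableAt.differentiableWithinAt
    · intro t ht
      rw [(hψd t).deriv]
      have ht' : t ∈ Set.Icc (0:ℝ) θ := interior_subset ht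
      linarith [hb t ht']
  have := hanti (Set.left_mem_Icc.2 hθ) (Set.right_mem_Icc.2 hθ) hθ
  simp only [hψ] at this
  nlinarith [this]

lemma arith_neg (K x : ℝ) (h : K + x ≤ 0) (hx : 0 < x) : K < 0 := by linarith

lemma arith_inv_neg (a b : ℝ) (ha : 0 < a) (h : a⁻¹ * b < 0) : b < 0 := by
  by_contra hb
  push_neg at hb
  have h1 : 0 < a⁻¹ := inv_pos.2 ha
  nlinarith

lemma arith_strict (A B K r t Lf η : ℝ) (hd : A ≤ B + K * t + Lf * r * t ^ 2 / 2)
    (hK : K + η / 2 * r ≤ 0) (hLfη : Lf * r ≤ η * r) (hr : 0 < r)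
    (ht0 : 0 < t) (ht1 : t < 1) (hη : 0 < η) : A < B := by
  nlinarith [mul_le_mul_of_nonneg_left hK (le_of_lt ht0), mul_pos ht0 hr, sq_nonneg t,
    mul_le_mul_of_nonneg_right hLfη (sq_nonneg t), mul_pos (mul_pos hη ht0) hr]

lemma arith_final (A B K r Lf η : ℝ) (hd : A ≤ B + K * 1 + Lf * r * 1 ^ 2 / 2)
    (hLfη : Lf * r ≤ η * r) : A ≤ B + K + η / 2 * r := by nlinarith

lemma arith_phip (K I N Lf s nv : ℝ) (h1 : I ≤ N * nv) (h2 : N * nv ≤ Lf * (s * nv) * nv) :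
    K + I ≤ K + Lf * nv ^ 2 * s := by nlinarith

/-- The projected gradient step stays in the sublevel set and
decreases f by at least D_η(x_k).  Here `p` is the projected gradient point
P_η(x_k), i.e. the minimizer over C of y ↦ ⟪∇f(x_k), y − x_k⟫ + (η/2)‖y − x_k‖²,
and D_η(x_k) = −(⟪∇f(x_k), p − x_k⟫ + (η/2)‖p − x_k‖²). -/
theorem stmt_6 {d n : ℕ}
    (F : EuclideanSpace ℝ (Fin d) → EuclideanSpace ℝ (Fin n))
    (hF : ContDiff ℝ 1 F)
    (f : EuclideanSpace ℝ (Fin d) → ℝ)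
    (hf : ∀ x, f x = (1 / 2) * ‖F x‖ ^ 2)
    (C : Set (EuclideanSpace ℝ (Fin d)))
    (hCne : C.Nonempty) (hCclosed : IsClosed C) (hCconvex : Convex ℝ C)
    (xk : EuclideanSpace ℝ (Fin d)) (hxk : xk ∈ C)
    (Lf : ℝ) (hLf : 0 < Lf)
    (hgradLip : ∀ x ∈ C, ∀ y ∈ C, segment ℝ x y ⊆ {z | f z ≤ f xk} →
      ‖gradf F y - gradf F x‖ ≤ Lf * ‖y - x‖)
    (η : ℝ) (hη : Lf ≤ η)
    (p : EuclideanSpace ℝ (Fin d)) (hp : p ∈ C)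
    (hpmin : ∀ y ∈ C,
      ⟪gradf F xk, p - xk⟫ + (η / 2) * ‖p - xk‖ ^ 2 ≤
      ⟪gradf F xk, y - xk⟫ + (η / 2) * ‖y - xk‖ ^ 2) :
    segment ℝ xk p ⊆ {z | f z ≤ f xk} ∧
    f p - f xk ≤ -(-(⟪gradf F xk, p - xk⟫ + (η / 2) * ‖p - xk‖ ^ 2)) := by
  rw [neg_neg]
  by_cases hpx : p = xk
  · subst hpx
    constructor
    · rw [segment_same]
      intro z hz
      simp only [Set.mem_singleton_iff] at hz
      subst hz
      simp only [Set.mem_setOf_eq]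
      exact le_rfl
    · simp
  -- set up
  set v : EuclideanSpace ℝ (Fin d) := p - xk with hv
  have hvne : v ≠ 0 := sub_ne_zero.2 hpx
  have hr : (0:ℝ) < ‖v‖ ^ 2 := pow_pos (norm_pos_iff.mpr hvne) 2
  set K : ℝ := ⟪gradf F xk, v⟫ with hKdef
  set γ : ℝ → EuclideanSpace ℝ (Fin d) := fun t => xk + t • v with hγdef
  set φ : ℝ → ℝ := fun t => f (γ t) with hφdef
  have hφd : ∀ t : ℝ, HasDerivAt φ ⟪gradf F (γ t), v⟫ t := fun t =>
    hasDerivAt_phi_aux F hF f hf xk v t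
  have hφc : Continuous φ := by
    have : Differentiable ℝ φ := fun t => (hφd t).differentiableAt
    exact this.continuous
  have hγ0 : γ 0 = xk := by simp [hγdef]
  have hγ1 : γ 1 = p := by simp [hγdef, hv]
  have hγC : ∀ t ∈ Set.Icc (0:ℝ) 1, γ t ∈ C := by
    intro t ht
    have : γ t = (1 - t) • xk + t • p := by
      simp only [hγdef, hv, smul_sub, sub_smul, one_smul]
      abel
    rw [this]
    exact hCconvex hxk hp (by linarith [ht.2]) ht.1 (by ring)
  have hKr : K + η / 2 * ‖v‖ ^ 2 ≤ 0 := by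
    have h := hpmin xk hxk
    rw [sub_self] at h
    simp only [inner_zero_right, norm_zero] at h
    have h0 : (0:ℝ) + η / 2 * 0 ^ 2 = 0 := by ring
    calc K + η / 2 * ‖v‖ ^ 2 ≤ 0 + η / 2 * 0 ^ 2 := h
    _ = 0 := h0
  have hη0 : (0:ℝ) < η := lt_of_lt_of_le hLf hη
  have hKneg : K < 0 := arith_neg K (η / 2 * ‖v‖ ^ 2) hKr (by positivity)
  -- the descent lemma given the sublevel condition up to θ
  have descent : ∀ θ ∈ Set.Icc (0:ℝ) 1, (∀ s ∈ Set.Icc (0:ℝ) θ, φ s ≤ φ 0) →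
      ∀ t ∈ Set.Icc (0:ℝ) θ, φ t ≤ φ 0 + K * t + (Lf * ‖v‖ ^ 2) * t ^ 2 / 2 := by
    intro θ hθ hQ t ht
    apply descent_aux φ (fun s => ⟪gradf F (γ s), v⟫) t K (Lf * ‖v‖ ^ 2) ht.1 hφd
    intro s hs
    have hs' : s ∈ Set.Icc (0:ℝ) θ := ⟨hs.1, le_trans hs.2 ht.2⟩
    have hs1 : s ∈ Set.Icc (0:ℝ) 1 := ⟨hs.1, le_trans hs'.2 hθ.2⟩
    -- segment from xk to γ s lies in sublevel set
    have hseg : segment ℝ xk (γ s) ⊆ {z | f z ≤ f xk} := by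
      intro z hz
      rw [segment_eq_image'] at hz
      obtain ⟨u, hu, rfl⟩ := hz
      have heq : xk + u • (γ s - xk) = γ (u * s) := by
        simp only [hγdef]
        rw [add_sub_cancel_left, smul_smul]
      show f (xk + u • (γ s - xk)) ≤ f xk
      rw [heq]
      have hus : u * s ∈ Set.Icc (0:ℝ) θ :=
        ⟨mul_nonneg hu.1 hs.1, le_trans (mul_le_of_le_one_left hs.1 hu.2) hs'.2⟩
      have := hQ (u * s) hus
      simpa [hφdef, hγ0] using this
    have hlip := hgradLip xk hxk (γ s) (hγC s hs1) hseg
    have hnorm : ‖γ s - xk‖ = s * ‖v‖ := by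
      simp only [hγdef, add_sub_cancel_left]
      rw [norm_smul, Real.norm_eq_abs, abs_of_nonneg hs.1]
    have hinner : ⟪gradf F (γ s), v⟫ = K + ⟪gradf F (γ s) - gradf F xk, v⟫ := by
      rw [inner_sub_left]; ring
    rw [hinner]
    have h1 : ⟪gradf F (γ s) - gradf F xk, v⟫ ≤ ‖gradf F (γ s) - gradf F xk‖ * ‖v‖ :=
      real_inner_le_norm _ _
    have h2 : ‖gradf F (γ s) - gradf F xk‖ * ‖v‖ ≤ Lf * (s * ‖v‖) * ‖v‖ := by
      rw [hnorm] at hlip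
      exact mul_le_mul_of_nonneg_right hlip (norm_nonneg v)
    exact arith_phip K _ _ Lf s ‖v‖ h1 h2
  -- the continuation argument
  set A : Set ℝ := {θ | θ ∈ Set.Icc (0:ℝ) 1 ∧ ∀ s ∈ Set.Icc (0:ℝ) θ, φ s ≤ φ 0} with hA
  have h0A : (0:ℝ) ∈ A := by
    refine ⟨⟨le_refl 0, zero_le_one⟩, ?_⟩
    intro s hs
    have : s = 0 := le_antisymm hs.2 hs.1
    subst this; exact le_refl _
  have hbdd : BddAbove A := ⟨1, fun θ hθ => hθ.1.2⟩
  set θs : ℝ := sSup A with hθs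
  have hθ0 : 0 ≤ θs := le_csSup hbdd h0A
  have hθ1 : θs ≤ 1 := csSup_le ⟨0, h0A⟩ fun θ hθ => hθ.1.2
  have hQθs : ∀ s ∈ Set.Icc (0:ℝ) θs, φ s ≤ φ 0 := by
    have hlt : ∀ s, 0 ≤ s → s < θs → φ s ≤ φ 0 := by
      intro s hs0 hslt
      obtain ⟨θ, hθA, hsθ⟩ := exists_lt_of_lt_csSup ⟨0, h0A⟩ hslt
      exact hθA.2 s ⟨hs0, le_of_lt hsθ⟩
    intro s hs
    rcases lt_or_eq_of_le hs.2 with h | h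
    · exact hlt s hs.1 h
    · rw [h]
      rcases eq_or_lt_of_le hθ0 with h0 | h0
      · rw [← h0]
      · -- θs > 0 : use continuity from the left
        have htd : Filter.Tendsto φ (nhdsWithin θs (Set.Iio θs)) (nhds (φ θs)) :=
          (hφc.tendsto θs).mono_left nhdsWithin_le_nhds
        apply le_of_tendsto htd
        filter_upwards [Ioo_mem_nhdsLT_of_mem (⟨h0, le_refl θs⟩ : θs ∈ Set.Ioc 0 θs)]
          with u hu
        exact hlt u (le_of_lt hu.1) hu.2
  have hθsA : θs ∈ A := ⟨⟨hθ0, hθ1⟩, hQθs⟩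
  -- show θs = 1
  have hθs1 : θs = 1 := by
    by_contra hne
    have hlt1 : θs < 1 := lt_of_le_of_ne hθ1 hne
    have hev : ∀ᶠ s in nhdsWithin θs (Set.Ioi θs), φ s < φ 0 := by
      rcases eq_or_lt_of_le hθ0 with h0 | h0
      · -- θs = 0 : derivative is negative
        have hK0 : ⟪gradf F (γ (0:ℝ)), v⟫ = K := by rw [hγ0]
        have hslope := hasDerivAt_iff_tendsto_slope.1 (hφd 0)
        rw [hK0] at hslope
        have hslope' : Filter.Tendsto (slope φ 0) (nhdsWithin (0:ℝ) (Set.Ioi 0)) (nhds K) :=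
          hslope.mono_left (nhdsWithin_mono _ (fun x hx => Set.mem_compl_singleton_iff.2
            (ne_of_gt hx)))
        have hev' : ∀ᶠ u in nhdsWithin (0:ℝ) (Set.Ioi 0), slope φ 0 u < 0 :=
          hslope'.eventually_lt_const hKneg
        rw [← h0]
        filter_upwards [hev', self_mem_nhdsWithin] with u hu hu'
        have hupos : (0:ℝ) < u := hu'
        have h2 : u⁻¹ * (φ u - φ 0) < 0 := by simpa [slope] using hu
        have := arith_inv_neg u (φ u - φ 0) hupos h2
        linarith
      · -- θs > 0 : strict decrease at θs, then continuity
        have hd := descent θs ⟨hθ0, hθ1⟩ hQθs θs ⟨hθ0, le_refl _⟩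
        have hstrict : φ θs < φ 0 :=
          arith_strict (φ θs) (φ 0) K (‖v‖ ^ 2) θs Lf η hd hKr
            (mul_le_mul_of_nonneg_right hη (le_of_lt hr)) hr h0 hlt1 hη0
        have : Filter.Tendsto φ (nhdsWithin θs (Set.Ioi θs)) (nhds (φ θs)) :=
          (hφc.tendsto θs).mono_left nhdsWithin_le_nhds
        exact this.eventually_lt_const hstrict
    obtain ⟨c, hc, hsub⟩ := mem_nhdsGT_iff_exists_Ioc_subset.1 hev
    set θ' : ℝ := min c 1 with hθ'
    have hθ'gt : θs < θ' := lt_min hc hlt1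
    have hθ'A : θ' ∈ A := by
      refine ⟨⟨le_trans hθ0 (le_of_lt hθ'gt), min_le_right _ _⟩, ?_⟩
      intro s hs
      rcases le_or_gt s θs with h | h
      · exact hQθs s ⟨hs.1, h⟩
      · exact le_of_lt (hsub ⟨h, le_trans hs.2 (min_le_left _ _)⟩)
    have := le_csSup hbdd hθ'A
    linarith
  -- conclude
  have hQ1 : ∀ s ∈ Set.Icc (0:ℝ) 1, φ s ≤ φ 0 := hθs1 ▸ hQθs
  constructor
  · intro z hz
    rw [segment_eq_image'] at hz
    obtain ⟨t, ht, rfl⟩ := hz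
    have := hQ1 t ht
    show f (xk + t • (p - xk)) ≤ f xk
    simpa [hφdef, hγ0, hγdef, hv] using this
  · have hd := descent 1 ⟨zero_le_one, le_refl _⟩ hQ1 1 ⟨zero_le_one, le_refl _⟩
    have hφ1 : φ 1 = f p := by simp only [hφdef]; rw [hγ1]
    have hφ0 : φ 0 = f xk := by simp only [hφdef]; rw [hγ0]
    have hLfη : Lf * ‖v‖ ^ 2 ≤ η * ‖v‖ ^ 2 :=
      mul_le_mul_of_nonneg_right hη (le_of_lt hr)
    rw [hφ1, hφ0] at hd
    have h := arith_final (f p) (f xk) K (‖v‖ ^ 2) Lf η hd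
      (mul_le_mul_of_nonneg_right hη (le_of_lt hr))
    simp only [hKdef, hv] at h
    linarith
end

section
/- Fix x₀ ∈ C and constants σ, L > 0 such that ‖J(x)‖ ≤ σ for all x ∈ C ∩ S(x₀) and ‖J(y) − J(x)‖ ≤ L‖y − x‖ for all x, y ∈ C with L(x, y) ⊆ S(x₀), and let L_f := σ² + L‖F(x₀)‖. Then for every η ≥ L_f and every x ∈ C ∩ S(x₀), one has ‖∇f(P_η(x)) − ∇f(x)‖ ≤ L_f‖P_η(x) − x‖. -/
open scoped RealInnerProductSpace

lemma gradf_hasFDerivAt {d n : ℕ}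
    {F : EuclideanSpace ℝ (Fin d) → EuclideanSpace ℝ (Fin n)}
    (hF : ContDiff ℝ 1 F)
    {f : EuclideanSpace ℝ (Fin d) → ℝ}
    (hf : ∀ x, f x = (1 / 2) * ‖F x‖ ^ 2)
    (z : EuclideanSpace ℝ (Fin d)) :
    HasFDerivAt f (innerSL ℝ (gradf F z)) z := by
  have hd := (hF.differentiable one_ne_zero z).hasFDerivAt
  have h2 := hd.norm_sq
  have h3 : HasFDerivAt f
      ((1/2 : ℝ) • (2 • (innerSL ℝ (F z)).comp (fderiv ℝ F z))) z := by
    have := h2.const_mul (1/2 : ℝ)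
    have hfeq : f = fun w => (1/2 : ℝ) * ‖F w‖ ^ 2 := funext hf
    rw [hfeq]
    exact this
  refine h3.congr_fderiv ?_
  ext v
  simp [gradf, ContinuousLinearMap.adjoint_inner_left]

lemma gradf_hasDerivAt {d n : ℕ}
    {F : EuclideanSpace ℝ (Fin d) → EuclideanSpace ℝ (Fin n)}
    (hF : ContDiff ℝ 1 F)
    {f : EuclideanSpace ℝ (Fin d) → ℝ}
    (hf : ∀ x, f x = (1 / 2) * ‖F x‖ ^ 2)
    (x v : EuclideanSpace ℝ (Fin d)) (t : ℝ) :
    HasDerivAt (fun s => f (x + s • v)) ⟪gradf F (x + t • v), v⟫ t := by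
  have hγ : HasDerivAt (fun s : ℝ => x + s • v) v t := by
    simpa using ((hasDerivAt_id t).smul_const v).const_add x
  have := (gradf_hasFDerivAt hF hf (x + t • v)).comp_hasDerivAt t hγ
  exact this
lemma normF_le {d n : ℕ}
    {F : EuclideanSpace ℝ (Fin d) → EuclideanSpace ℝ (Fin n)}
    {f : EuclideanSpace ℝ (Fin d) → ℝ}
    (hf : ∀ x, f x = (1 / 2) * ‖F x‖ ^ 2)
    {a x₀ : EuclideanSpace ℝ (Fin d)} (h : f a ≤ f x₀) :
    ‖F a‖ ≤ ‖F x₀‖ := by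
  rw [hf a, hf x₀] at h
  nlinarith [norm_nonneg (F a), norm_nonneg (F x₀)]

/-- Gradient Lipschitz bound for admissible pairs. -/
lemma grad_lip {d n : ℕ}
    {F : EuclideanSpace ℝ (Fin d) → EuclideanSpace ℝ (Fin n)}
    (hF : ContDiff ℝ 1 F)
    {f : EuclideanSpace ℝ (Fin d) → ℝ}
    (hf : ∀ x, f x = (1 / 2) * ‖F x‖ ^ 2)
    {C : Set (EuclideanSpace ℝ (Fin d))} (hCconvex : Convex ℝ C)
    {x₀ : EuclideanSpace ℝ (Fin d)}
    {σ L : ℝ}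
    (hJ : ∀ x ∈ C ∩ {z | f z ≤ f x₀}, ‖fderiv ℝ F x‖ ≤ σ)
    (hJLip : ∀ x ∈ C, ∀ y ∈ C, segment ℝ x y ⊆ {z | f z ≤ f x₀} →
      ‖fderiv ℝ F y - fderiv ℝ F x‖ ≤ L * ‖y - x‖)
    {a b : EuclideanSpace ℝ (Fin d)} (ha : a ∈ C) (hb : b ∈ C)
    (hseg : segment ℝ a b ⊆ {z | f z ≤ f x₀}) :
    ‖gradf F b - gradf F a‖ ≤ (σ ^ 2 + L * ‖F x₀‖) * ‖b - a‖ := by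
  have hsegC : segment ℝ a b ⊆ C := hCconvex.segment_subset ha hb
  -- mean value: ‖F b - F a‖ ≤ σ ‖b - a‖
  have hFV : ‖F b - F a‖ ≤ σ * ‖b - a‖ := by
    exact (convex_segment a b).norm_image_sub_le_of_norm_hasFDerivWithin_le
      (f' := fun w => fderiv ℝ F w)
      (fun w hw => ((hF.differentiable one_ne_zero w).hasFDerivAt).hasFDerivWithinAt)
      (fun w hw => hJ w ⟨hsegC hw, hseg hw⟩)
      (left_mem_segment ℝ a b) (right_mem_segment ℝ a b)
  have hJd : ‖fderiv ℝ F b - fderiv ℝ F a‖ ≤ L * ‖b - a‖ := hJLip a ha b hb hseg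
  have hFa : ‖F a‖ ≤ ‖F x₀‖ := normF_le hf (hseg (left_mem_segment ℝ a b))
  have hJb : ‖fderiv ℝ F b‖ ≤ σ :=
    hJ b ⟨hb, hseg (right_mem_segment ℝ a b)⟩
  have key : gradf F b - gradf F a
      = (ContinuousLinearMap.adjoint (fderiv ℝ F b)) (F b - F a)
        + (ContinuousLinearMap.adjoint (fderiv ℝ F b - fderiv ℝ F a)) (F a) := by
    simp only [gradf, map_sub, ContinuousLinearMap.sub_apply]
    abel
  rw [key]
  have h1 : ‖(ContinuousLinearMap.adjoint (fderiv ℝ F b)) (F b - F a)‖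
      ≤ σ * (σ * ‖b - a‖) := by
    calc ‖(ContinuousLinearMap.adjoint (fderiv ℝ F b)) (F b - F a)‖
        ≤ ‖ContinuousLinearMap.adjoint (fderiv ℝ F b)‖ * ‖F b - F a‖ :=
          ContinuousLinearMap.le_opNorm _ _
      _ ≤ σ * (σ * ‖b - a‖) := by
          rw [LinearIsometryEquiv.norm_map]
          have h0 : (0:ℝ) ≤ ‖F b - F a‖ := norm_nonneg _
          have h0' : (0:ℝ) ≤ σ := le_trans (norm_nonneg _) hJb
          exact mul_le_mul hJb hFV h0 h0'
  have h2 : ‖(ContinuousLinearMap.adjoint (fderiv ℝ F b - fderiv ℝ F a)) (F a)‖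
      ≤ L * ‖b - a‖ * ‖F x₀‖ := by
    calc ‖(ContinuousLinearMap.adjoint (fderiv ℝ F b - fderiv ℝ F a)) (F a)‖
        ≤ ‖ContinuousLinearMap.adjoint (fderiv ℝ F b - fderiv ℝ F a)‖ * ‖F a‖ :=
          ContinuousLinearMap.le_opNorm _ _
      _ ≤ L * ‖b - a‖ * ‖F x₀‖ := by
          rw [LinearIsometryEquiv.norm_map]
          exact mul_le_mul hJd hFa (norm_nonneg _)
            (le_trans (norm_nonneg _) hJd)
  calc ‖_ + _‖ ≤ _ := norm_add_le _ _
    _ ≤ σ * (σ * ‖b - a‖) + L * ‖b - a‖ * ‖F x₀‖ := add_le_add h1 h2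
    _ = (σ ^ 2 + L * ‖F x₀‖) * ‖b - a‖ := by ring
set_option maxHeartbeats 1000000

/-- Lipschitz-like bound on ∇f between a point of C ∩ S(x₀) and its
projected gradient point.  Here `p` is P_η(x), the minimizer over C of
y ↦ ⟪∇f(x), y − x⟫ + (η/2)‖y − x‖². -/
theorem stmt_7 {d n : ℕ}
    (F : EuclideanSpace ℝ (Fin d) → EuclideanSpace ℝ (Fin n))
    (hF : ContDiff ℝ 1 F)
    (f : EuclideanSpace ℝ (Fin d) → ℝ)
    (hf : ∀ x, f x = (1 / 2) * ‖F x‖ ^ 2)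
    (C : Set (EuclideanSpace ℝ (Fin d)))
    (hCne : C.Nonempty) (hCclosed : IsClosed C) (hCconvex : Convex ℝ C)
    (x₀ : EuclideanSpace ℝ (Fin d)) (hx₀ : x₀ ∈ C)
    (σ L : ℝ) (hσ : 0 < σ) (hL : 0 < L)
    (hJ : ∀ x ∈ C ∩ {z | f z ≤ f x₀}, ‖fderiv ℝ F x‖ ≤ σ)
    (hJLip : ∀ x ∈ C, ∀ y ∈ C, segment ℝ x y ⊆ {z | f z ≤ f x₀} →
      ‖fderiv ℝ F y - fderiv ℝ F x‖ ≤ L * ‖y - x‖)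
    (Lf : ℝ) (hLfdef : Lf = σ ^ 2 + L * ‖F x₀‖)
    (η : ℝ) (hη : Lf ≤ η)
    (x : EuclideanSpace ℝ (Fin d)) (hx : x ∈ C ∩ {z | f z ≤ f x₀})
    (p : EuclideanSpace ℝ (Fin d)) (hp : p ∈ C)
    (hpmin : ∀ y ∈ C,
      ⟪gradf F x, p - x⟫ + (η / 2) * ‖p - x‖ ^ 2 ≤
      ⟪gradf F x, y - x⟫ + (η / 2) * ‖y - x‖ ^ 2) :
    ‖gradf F p - gradf F x‖ ≤ Lf * ‖p - x‖ := by
  have hx2 : f x ≤ f x₀ := hx.2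
  by_cases hpx : p = x
  · subst hpx; simp
  have hpxn : (0:ℝ) < ‖p - x‖ := by
    rw [norm_pos_iff]; exact sub_ne_zero.mpr hpx
  have hFx₀ : (0:ℝ) ≤ ‖F x₀‖ := norm_nonneg _
  have hLf0 : 0 < Lf := by nlinarith
  have hη0 : 0 < η := lt_of_lt_of_le hLf0 hη
  set v := p - x with hv
  have hD : ⟪gradf F x, v⟫ + (η/2) * ‖v‖^2 ≤ 0 := by
    have h := hpmin x hx.1
    simp only [sub_self, inner_zero_right, norm_zero] at h
    simpa using h
  set γ : ℝ → EuclideanSpace ℝ (Fin d) := fun t => x + t • v with hγ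
  have hγC : ∀ t ∈ Set.Icc (0:ℝ) 1, γ t ∈ C := by
    intro t ht
    have hm : γ t ∈ segment ℝ x p := by
      rw [segment_eq_image']
      exact ⟨t, ht, rfl⟩
    exact hCconvex.segment_subset hx.1 hp hm
  set g : ℝ → ℝ := fun t => f (γ t) with hg
  have hgD : ∀ t, HasDerivAt g ⟪gradf F (γ t), v⟫ t :=
    fun t => gradf_hasDerivAt hF hf x v t
  have hgcont : Continuous g := by
    have hdg : Differentiable ℝ g := fun t => (hgD t).differentiableAt
    exact hdg.continuous
  have hg0 : g 0 = f x := by simp [hg, hγ]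
  set A := {θ : ℝ | θ ∈ Set.Icc (0:ℝ) 1 ∧ ∀ t ∈ Set.Icc 0 θ, g t ≤ f x₀} with hA
  have hA0 : (0:ℝ) ∈ A := by
    refine ⟨⟨le_refl 0, zero_le_one⟩, ?_⟩
    intro t ht
    have ht0 : t = 0 := le_antisymm ht.2 ht.1
    rw [ht0, hg0]; exact hx2
  have hAbdd : BddAbove A := ⟨1, fun θ hθ => hθ.1.2⟩
  set θs := sSup A with hθs
  have hθs0 : 0 ≤ θs := le_csSup hAbdd hA0
  have hθs1 : θs ≤ 1 := csSup_le ⟨0, hA0⟩ fun θ hθ => hθ.1.2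
  have hlt : ∀ t, 0 ≤ t → t < θs → g t ≤ f x₀ := by
    intro t ht0 htθ
    obtain ⟨θ, hθA, hθt⟩ := exists_lt_of_lt_csSup ⟨0, hA0⟩ htθ
    exact hθA.2 t ⟨ht0, le_of_lt hθt⟩
  have hθsA : θs ∈ A := by
    refine ⟨⟨hθs0, hθs1⟩, ?_⟩
    intro t ht
    rcases lt_or_eq_of_le ht.2 with h | h
    · exact hlt t ht.1 h
    · subst h
      rcases eq_or_lt_of_le hθs0 with h0 | h0
      · rw [← h0, hg0]; exact hx2
      · have hclosed : IsClosed {t : ℝ | g t ≤ f x₀} :=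
          isClosed_le hgcont continuous_const
        have hsub : Set.Ico (0:ℝ) θs ⊆ {t | g t ≤ f x₀} :=
          fun s hs => hlt s hs.1 hs.2
        have hmem : θs ∈ closure (Set.Ico (0:ℝ) θs) := by
          rw [closure_Ico (ne_of_lt h0)]
          exact ⟨hθs0, le_refl _⟩
        have := (closure_mono hsub) hmem
        rwa [hclosed.closure_eq] at this
  -- descent inequality for elements of A
  have hdesc : ∀ θb, θb ∈ A →
      g θb ≤ f x + θb * ⟪gradf F x, v⟫ + Lf * ‖v‖^2 * θb^2 / 2 := by
    intro θb hθb
    set c := Lf * ‖v‖^2 with hc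
    set φ : ℝ → ℝ := fun t => g t - t * ⟪gradf F x, v⟫ - c * t^2 / 2 with hφ
    have hφ' : ∀ t, HasDerivAt φ
        (⟪gradf F (γ t), v⟫ - ⟪gradf F x, v⟫ - c * t) t := by
      intro t
      have h1 := (hgD t).sub ((hasDerivAt_id t).mul_const ⟪gradf F x, v⟫)
      have h2 : HasDerivAt (fun s : ℝ => c * s^2 / 2) (c * t) t := by
        have := ((hasDerivAt_pow 2 t).const_mul c).div_const 2
        exact this.congr_deriv (by ring)
      have h3 := h1.sub h2
      exact h3.congr_deriv (by simp)
  /-  rest below -/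
    have hmono : AntitoneOn φ (Set.Icc 0 θb) := by
      apply antitoneOn_of_deriv_nonpos (convex_Icc 0 θb)
      · exact (Differentiable.continuous fun t => (hφ' t).differentiableAt).continuousOn
      · intro t _; exact ((hφ' t).differentiableAt).differentiableWithinAt
      · intro t ht
        rw [(hφ' t).deriv]
        rw [interior_Icc] at ht
        have htθb : t ≤ θb := le_of_lt ht.2
        have hseg : segment ℝ x (γ t) ⊆ {z | f z ≤ f x₀} := by
          intro w hw
          rw [segment_eq_image'] at hw
          obtain ⟨s, hs, rfl⟩ := hw
          have heq : (fun θ : ℝ => x + θ • (γ t - x)) s = γ (s * t) := by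
            simp [hγ, mul_smul]
          rw [heq]
          exact hθb.2 (s * t) ⟨mul_nonneg hs.1 (le_of_lt ht.1),
            le_trans (by nlinarith [hs.2, ht.1.le] : s * t ≤ t) htθb⟩
        have hγtC : γ t ∈ C := hγC t ⟨le_of_lt ht.1, le_trans htθb hθb.1.2⟩
        have hlip := grad_lip hF hf hCconvex hJ hJLip hx.1 hγtC hseg
        rw [← hLfdef] at hlip
        have hnorm : ‖γ t - x‖ = t * ‖v‖ := by
          simp [hγ, norm_smul, abs_of_pos ht.1]
        rw [hnorm] at hlip
        have hip : ⟪gradf F (γ t) - gradf F x, v⟫ ≤ Lf * (t * ‖v‖) * ‖v‖ :=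
          le_trans (real_inner_le_norm _ _)
            (mul_le_mul_of_nonneg_right hlip (norm_nonneg v))
        rw [inner_sub_left] at hip
        simp only [hc]
        nlinarith [hip]
    have hkey := hmono (Set.left_mem_Icc.mpr hθb.1.1)
      (Set.right_mem_Icc.mpr hθb.1.1) hθb.1.1
    have hφ0 : φ 0 = f x := by simp [hφ, hg0]
    have hφθ : φ θb = g θb - θb * ⟪gradf F x, v⟫ - c * θb^2 / 2 := rfl
    rw [hφ0, hφθ] at hkey
    linarith
  -- θs is positive
  have hDneg : ⟪gradf F x, v⟫ < 0 := by nlinarith [sq_nonneg ‖v‖, pow_pos hpxn 2]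
  have hθspos : 0 < θs := by
    have hg0' : HasDerivAt g ⟪gradf F x, v⟫ 0 := by
      have := hgD 0
      simpa [hγ] using this
    have hslope := hasDerivAt_iff_tendsto_slope.mp hg0'
    have h1 : Filter.Tendsto (slope g 0) (nhdsWithin 0 (Set.Ioi 0))
        (nhds ⟪gradf F x, v⟫) :=
      hslope.mono_left (nhdsWithin_mono 0 (fun t ht => ne_of_gt ht))
    have h2 : ∀ᶠ t in nhdsWithin 0 (Set.Ioi 0), slope g 0 t < 0 :=
      h1.eventually_lt_const hDneg
    rw [Filter.eventually_iff, Metric.mem_nhdsWithin_iff] at h2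
    obtain ⟨ε, hε, hball⟩ := h2
    set θ₀ := min (ε/2) 1 with hθ₀
    have hθ₀pos : 0 < θ₀ := lt_min (by linarith) one_pos
    have hθ₀A : θ₀ ∈ A := by
      refine ⟨⟨le_of_lt hθ₀pos, min_le_right _ _⟩, ?_⟩
      intro t ht
      rcases eq_or_lt_of_le ht.1 with h0 | h0
      · rw [← h0, hg0]; exact hx2
      · have hdist : dist t 0 < ε := by
          rw [Real.dist_eq, sub_zero, abs_of_pos h0]
          have : t ≤ ε/2 := le_trans ht.2 (min_le_left _ _)
          linarith
        have := hball ⟨Metric.mem_ball.mpr hdist, h0⟩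
        simp only [Set.mem_setOf_eq] at this
        have hslope_eq : slope g 0 t = (g t - g 0) / t := by
          rw [slope_def_field]; ring_nf
        rw [hslope_eq] at this
        have : g t - g 0 < 0 := by
          have := mul_neg_of_pos_of_neg h0 this
          rw [mul_div_cancel₀] at this
          · linarith
          · exact ne_of_gt h0
        rw [hg0] at this
        linarith [hx2]
    exact lt_of_lt_of_le hθ₀pos (le_csSup hAbdd hθ₀A)
  -- θs = 1
  have hθseq : θs = 1 := by
    by_contra hne
    have hθslt : θs < 1 := lt_of_le_of_ne hθs1 hne
    have hgθs := hdesc θs hθsA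
    have h5 : Lf * θs < η := lt_of_lt_of_le (by nlinarith) hη
    have hstrict : g θs < f x₀ := by
      have hv2 : (0:ℝ) < ‖v‖^2 := pow_pos hpxn 2
      have hDθ : θs * ⟪gradf F x, v⟫ ≤ θs * (-(η/2) * ‖v‖^2) :=
        mul_le_mul_of_nonneg_left (by linarith) hθs0
      have hprod : 0 < θs * ‖v‖^2 * (η - Lf * θs) :=
        mul_pos (mul_pos hθspos hv2) (by linarith)
      nlinarith [hx2, hgθs, hDθ, hprod]
    have hev : ∀ᶠ t in nhds θs, g t < f x₀ :=
      hgcont.continuousAt.eventually_lt_const hstrict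
    rw [Metric.eventually_nhds_iff] at hev
    obtain ⟨ε, hε, hball⟩ := hev
    set θ' := min (θs + ε/2) 1 with hθ'
    have hθ'A : θ' ∈ A := by
      refine ⟨⟨le_trans hθs0 (le_min (by linarith) (by linarith)), min_le_right _ _⟩, ?_⟩
      intro t ht
      rcases le_or_gt t θs with h | h
      · exact hθsA.2 t ⟨ht.1, h⟩
      · apply le_of_lt
        apply hball
        rw [Real.dist_eq, abs_of_pos (by linarith : (0:ℝ) < t - θs)]
        have : t ≤ θs + ε/2 := le_trans ht.2 (min_le_left _ _)
        linarith
    have hle : θ' ≤ θs := le_csSup hAbdd hθ'A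
    have hgt : θs < θ' := lt_min (by linarith) hθslt
    linarith
  -- conclude
  have hsegS : segment ℝ x p ⊆ {z | f z ≤ f x₀} := by
    intro w hw
    rw [segment_eq_image'] at hw
    obtain ⟨t, ht, rfl⟩ := hw
    exact hθsA.2 t ⟨ht.1, by rw [hθseq]; exact ht.2⟩
  have := grad_lip hF hf hCconvex hJ hJLip hx.1 hp hsegS
  rw [hLfdef]
  exact this
end

section
/- Fix x₀ ∈ C and constants σ, L > 0 such that ‖J(x)‖ ≤ σ for all x ∈ C ∩ S(x₀) and ‖J(y) − J(x)‖ ≤ L‖y − x‖ for all x, y ∈ C with L(x, y) ⊆ S(x₀), and let L_f := σ² + L‖F(x₀)‖. Then for every x ∈ C ∩ S(x₀) and every η ≥ L_f, the point P_η(x) is a (2‖G_η(x)‖)-stationary point of the problem min_{x ∈ C} f(x). -/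
set_option maxHeartbeats 1000000


open scoped RealInnerProductSpace

lemma deriv_along {d n : ℕ}
    (F : EuclideanSpace ℝ (Fin d) → EuclideanSpace ℝ (Fin n))
    (hF : ContDiff ℝ 1 F)
    (f : EuclideanSpace ℝ (Fin d) → ℝ)
    (hf : ∀ x, f x = (1 / 2) * ‖F x‖ ^ 2)
    (x v : EuclideanSpace ℝ (Fin d)) (t : ℝ) :
    HasDerivAt (fun s : ℝ => f (x + s • v)) ⟪gradf F (x + t • v), v⟫ t := by
  set γ : ℝ → EuclideanSpace ℝ (Fin d) := fun s => x + s • v with hγ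
  have hγd : HasDerivAt γ v t := by
    have := ((hasDerivAt_id t).smul_const v).const_add x
    simp only [id, one_smul] at this
    exact this
  have hFd : HasFDerivAt F (fderiv ℝ F (γ t)) (γ t) :=
    (hF.differentiable one_ne_zero (γ t)).hasFDerivAt
  have hFγ : HasDerivAt (fun s => F (γ s)) (fderiv ℝ F (γ t) v) t :=
    hFd.comp_hasDerivAt t hγd
  have hinner : HasDerivAt (fun s => ⟪F (γ s), F (γ s)⟫)
      (⟪F (γ t), fderiv ℝ F (γ t) v⟫ + ⟪fderiv ℝ F (γ t) v, F (γ t)⟫) t :=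
    hFγ.inner ℝ hFγ
  have := hinner.const_mul (1/2 : ℝ)
  have heq : (1/2 : ℝ) * (⟪F (γ t), fderiv ℝ F (γ t) v⟫ + ⟪fderiv ℝ F (γ t) v, F (γ t)⟫)
      = ⟪gradf F (γ t), v⟫ := by
    rw [gradf, ContinuousLinearMap.adjoint_inner_left,
      real_inner_comm ((fderiv ℝ F (γ t)) v) (F (γ t))]
    ring
  rw [heq] at this
  have hfun : (fun s : ℝ => f (x + s • v)) = fun y => 1 / 2 * ⟪F (γ y), F (γ y)⟫ := by
    funext s
    rw [hf, real_inner_self_eq_norm_sq]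
  rw [hfun]
  exact this
lemma gradLip {d n : ℕ}
    (F : EuclideanSpace ℝ (Fin d) → EuclideanSpace ℝ (Fin n))
    (hF : ContDiff ℝ 1 F)
    (f : EuclideanSpace ℝ (Fin d) → ℝ)
    (hf : ∀ x, f x = (1 / 2) * ‖F x‖ ^ 2)
    (C : Set (EuclideanSpace ℝ (Fin d))) (hCconvex : Convex ℝ C)
    (x₀ : EuclideanSpace ℝ (Fin d))
    (σ L : ℝ) (hσ : 0 < σ) (hL : 0 < L)
    (hJ : ∀ x ∈ C ∩ {z | f z ≤ f x₀}, ‖fderiv ℝ F x‖ ≤ σ)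
    (hJLip : ∀ x ∈ C, ∀ y ∈ C, segment ℝ x y ⊆ {z | f z ≤ f x₀} →
      ‖fderiv ℝ F y - fderiv ℝ F x‖ ≤ L * ‖y - x‖)
    (u v : EuclideanSpace ℝ (Fin d)) (hu : u ∈ C) (hv : v ∈ C)
    (hseg : segment ℝ u v ⊆ {z | f z ≤ f x₀}) :
    ‖gradf F v - gradf F u‖ ≤ (σ ^ 2 + L * ‖F x₀‖) * ‖v - u‖ := by
  have hdiff : ∀ z, DifferentiableAt ℝ F z := fun z => hF.differentiable one_ne_zero z
  have huS : f u ≤ f x₀ := hseg (left_mem_segment ℝ u v)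
  have hvS : f v ≤ f x₀ := hseg (right_mem_segment ℝ u v)
  have hFu_le : ‖F u‖ ≤ ‖F x₀‖ := by
    rw [hf, hf] at huS
    nlinarith [norm_nonneg (F u), norm_nonneg (F x₀)]
  have hmvt : ‖F v - F u‖ ≤ σ * ‖v - u‖ := by
    apply Convex.norm_image_sub_le_of_norm_fderiv_le (fun z _ => hdiff z)
      (fun z hz => hJ z ⟨hCconvex.segment_subset hu hv hz, hseg hz⟩)
      (convex_segment u v) (left_mem_segment ℝ u v) (right_mem_segment ℝ u v)
  have hJv : ‖fderiv ℝ F v‖ ≤ σ := hJ v ⟨hv, hvS⟩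
  have hJd : ‖fderiv ℝ F v - fderiv ℝ F u‖ ≤ L * ‖v - u‖ := hJLip u hu v hv hseg
  have key : gradf F v - gradf F u =
      (ContinuousLinearMap.adjoint (fderiv ℝ F v)) (F v - F u)
      + (ContinuousLinearMap.adjoint (fderiv ℝ F v - fderiv ℝ F u)) (F u) := by
    simp only [gradf, map_sub, ContinuousLinearMap.sub_apply]
    abel
  rw [key]
  have h1 : ‖(ContinuousLinearMap.adjoint (fderiv ℝ F v)) (F v - F u)‖
      ≤ σ * (σ * ‖v - u‖) := by
    calc ‖(ContinuousLinearMap.adjoint (fderiv ℝ F v)) (F v - F u)‖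
        ≤ ‖ContinuousLinearMap.adjoint (fderiv ℝ F v)‖ * ‖F v - F u‖ :=
          ContinuousLinearMap.le_opNorm _ _
      _ ≤ σ * (σ * ‖v - u‖) := by
          rw [ContinuousLinearMap.adjoint.norm_map]
          exact mul_le_mul hJv hmvt (norm_nonneg _) hσ.le
  have h2 : ‖(ContinuousLinearMap.adjoint (fderiv ℝ F v - fderiv ℝ F u)) (F u)‖
      ≤ (L * ‖v - u‖) * ‖F x₀‖ := by
    calc ‖(ContinuousLinearMap.adjoint (fderiv ℝ F v - fderiv ℝ F u)) (F u)‖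
        ≤ ‖ContinuousLinearMap.adjoint (fderiv ℝ F v - fderiv ℝ F u)‖ * ‖F u‖ :=
          ContinuousLinearMap.le_opNorm _ _
      _ ≤ (L * ‖v - u‖) * ‖F x₀‖ := by
          rw [ContinuousLinearMap.adjoint.norm_map]
          exact mul_le_mul hJd hFu_le (norm_nonneg _)
            (mul_nonneg hL.le (norm_nonneg _))
  calc ‖_ + _‖ ≤ _ + _ := norm_add_le _ _
    _ ≤ σ * (σ * ‖v - u‖) + (L * ‖v - u‖) * ‖F x₀‖ := add_le_add h1 h2
    _ = (σ ^ 2 + L * ‖F x₀‖) * ‖v - u‖ := by ring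

/-- A small gradient mapping yields an approximate stationary
point: `p = P_η(x)` is a (2‖G_η(x)‖)-stationary point of min_{x ∈ C} f(x),
where G_η(x) = η(x − P_η(x)). -/
theorem stmt_8 {d n : ℕ}
    (F : EuclideanSpace ℝ (Fin d) → EuclideanSpace ℝ (Fin n))
    (hF : ContDiff ℝ 1 F)
    (f : EuclideanSpace ℝ (Fin d) → ℝ)
    (hf : ∀ x, f x = (1 / 2) * ‖F x‖ ^ 2)
    (C : Set (EuclideanSpace ℝ (Fin d)))
    (hCne : C.Nonempty) (hCclosed : IsClosed C) (hCconvex : Convex ℝ C)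
    (x₀ : EuclideanSpace ℝ (Fin d)) (hx₀ : x₀ ∈ C)
    (σ L : ℝ) (hσ : 0 < σ) (hL : 0 < L)
    (hJ : ∀ x ∈ C ∩ {z | f z ≤ f x₀}, ‖fderiv ℝ F x‖ ≤ σ)
    (hJLip : ∀ x ∈ C, ∀ y ∈ C, segment ℝ x y ⊆ {z | f z ≤ f x₀} →
      ‖fderiv ℝ F y - fderiv ℝ F x‖ ≤ L * ‖y - x‖)
    (Lf : ℝ) (hLfdef : Lf = σ ^ 2 + L * ‖F x₀‖)
    (η : ℝ) (hη : Lf ≤ η)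
    (x : EuclideanSpace ℝ (Fin d)) (hx : x ∈ C ∩ {z | f z ≤ f x₀})
    (p : EuclideanSpace ℝ (Fin d)) (hp : p ∈ C)
    (hpmin : ∀ y ∈ C,
      ⟪gradf F x, p - x⟫ + (η / 2) * ‖p - x‖ ^ 2 ≤
      ⟪gradf F x, y - x⟫ + (η / 2) * ‖y - x‖ ^ 2) :
    ∀ y ∈ C, ⟪gradf F p, y - p⟫ ≥ -(2 * ‖η • (x - p)‖) * ‖y - p‖ := by
  obtain ⟨hxC, hxS⟩ := hx
  have hfx : f x ≤ f x₀ := hxS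
  set v : EuclideanSpace ℝ (Fin d) := p - x with hv
  set g : ℝ → ℝ := fun s => f (x + s • v) with hg
  set D : ℝ := ⟪gradf F x, v⟫ with hD
  have hLf0 : 0 < Lf := by
    rw [hLfdef]
    nlinarith [mul_nonneg hL.le (norm_nonneg (F x₀)), pow_pos hσ 2]
  have hη0 : 0 < η := lt_of_lt_of_le hLf0 hη
  have hgd : ∀ t : ℝ, HasDerivAt g ⟪gradf F (x + t • v), v⟫ t :=
    fun t => deriv_along F hF f hf x v t
  have hgc : Continuous g := by
    refine continuous_iff_continuousAt.mpr fun t => (hgd t).continuousAt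
  have hg0 : g 0 = f x := by simp [hg]
  -- membership of points on the ray in C
  have hγC : ∀ t : ℝ, 0 ≤ t → t ≤ 1 → x + t • v ∈ C := by
    intro t h0 h1
    have : x + t • v = (1 - t) • x + t • p := by
      rw [hv]; module
    rw [this]
    exact hCconvex hxC hp (by linarith) h0 (by ring)
  -- segments along the ray
  have hsegsub : ∀ t : ℝ, 0 ≤ t →
      segment ℝ x (x + t • v) ⊆ (fun r => x + r • v) '' Set.Icc 0 t := by
    intro t h0 z hz
    rw [segment_eq_image'] at hz
    obtain ⟨θ, hθ, rfl⟩ := hz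
    refine ⟨θ * t, ⟨mul_nonneg hθ.1 h0, by nlinarith [hθ.2]⟩, ?_⟩
    simp [add_sub_cancel_left, smul_smul]
  -- descent estimate
  have key : ∀ T : ℝ, 0 ≤ T → T ≤ 1 → (∀ s, 0 ≤ s → s ≤ T → g s ≤ f x₀) →
      g T ≤ f x + T * D + Lf / 2 * T ^ 2 * ‖v‖ ^ 2 := by
    intro T hT0 hT1 hTS
    have hlips : ∀ t, 0 ≤ t → t ≤ T →
        ‖gradf F (x + t • v) - gradf F x‖ ≤ Lf * (t * ‖v‖) := by
      intro t h0 h1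
      have hseg : segment ℝ x (x + t • v) ⊆ {z | f z ≤ f x₀} := by
        intro z hz
        obtain ⟨r, hr, rfl⟩ := hsegsub t h0 hz
        exact hTS r hr.1 (le_trans hr.2 h1)
      have := gradLip F hF f hf C hCconvex x₀ σ L hσ hL hJ hJLip
        x (x + t • v) hxC (hγC t h0 (le_trans h1 hT1)) hseg
      rw [hLfdef]
      calc ‖gradf F (x + t • v) - gradf F x‖
          ≤ (σ ^ 2 + L * ‖F x₀‖) * ‖x + t • v - x‖ := this
        _ = (σ ^ 2 + L * ‖F x₀‖) * (t * ‖v‖) := by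
            rw [add_sub_cancel_left, norm_smul, Real.norm_eq_abs, abs_of_nonneg h0]
    set φ : ℝ → ℝ := fun t => g t - t * D - Lf / 2 * t ^ 2 * ‖v‖ ^ 2 with hφ
    have hφd : ∀ t : ℝ, HasDerivAt φ
        (⟪gradf F (x + t • v), v⟫ - D - Lf / 2 * (2 * t) * ‖v‖ ^ 2) t := by
      intro t
      have h1 : HasDerivAt (fun t : ℝ => t * D) D t := by
        simpa using (hasDerivAt_id t).mul_const D
      have h2 : HasDerivAt (fun t : ℝ => Lf / 2 * t ^ 2 * ‖v‖ ^ 2)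
          (Lf / 2 * (2 * t) * ‖v‖ ^ 2) t := by
        have := ((hasDerivAt_pow 2 t).const_mul (Lf / 2)).mul_const (‖v‖ ^ 2)
        refine this.congr_deriv ?_
        ring
      exact ((hgd t).sub h1).sub h2
    have hmono : AntitoneOn φ (Set.Icc 0 T) := by
      apply antitoneOn_of_deriv_nonpos (convex_Icc 0 T)
      · exact (Continuous.continuousOn (by
          exact ((hgc.sub (continuous_id.mul continuous_const)).sub
            (((continuous_const.mul (continuous_pow 2)).mul continuous_const)))))
      · intro t ht
        exact ((hφd t).differentiableAt).differentiableWithinAt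
      · intro t ht
        rw [interior_Icc] at ht
        rw [(hφd t).deriv]
        have hcs : ⟪gradf F (x + t • v) - gradf F x, v⟫ ≤
            ‖gradf F (x + t • v) - gradf F x‖ * ‖v‖ := real_inner_le_norm _ _
        have hl := hlips t ht.1.le ht.2.le
        have hsub : ⟪gradf F (x + t • v), v⟫ - D =
            ⟪gradf F (x + t • v) - gradf F x, v⟫ := by
          rw [hD, inner_sub_left]
        have hvn : (0:ℝ) ≤ ‖v‖ := norm_nonneg v
        nlinarith [mul_le_mul_of_nonneg_right hl hvn]
    have := hmono (Set.left_mem_Icc.mpr hT0) (Set.right_mem_Icc.mpr hT0) hT0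
    simp only [hφ] at this
    rw [hg0] at this
    nlinarith [this]
  -- the whole unit ray stays in the sublevel set
  have hray : ∀ s : ℝ, 0 ≤ s → s ≤ 1 → g s ≤ f x₀ := by
    by_cases hvz : v = 0
    · intro s _ _
      have : g s = f x := by simp [hg, hvz]
      rw [this]; exact hxS
    · have hvpos : 0 < ‖v‖ := norm_pos_iff.mpr hvz
      have hDneg : D ≤ -(η / 2) * ‖v‖ ^ 2 := by
        have := hpmin x hxC
        simp only [sub_self, inner_zero_right, norm_zero] at this
        rw [hD, hv]
        nlinarith [this]
      set A : Set ℝ := {T | (0 ≤ T ∧ T ≤ 1) ∧ ∀ s, 0 ≤ s → s ≤ T → g s ≤ f x₀}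
        with hA
      have hA0 : (0:ℝ) ∈ A := by
        refine ⟨⟨le_rfl, zero_le_one⟩, fun s h0 h1 => ?_⟩
        have : s = 0 := le_antisymm h1 h0
        rw [this, hg0]; exact hxS
      have hAbdd : BddAbove A := ⟨1, fun t ht => ht.1.2⟩
      set T₀ : ℝ := sSup A with hT₀
      have hT₀0 : 0 ≤ T₀ := le_csSup hAbdd hA0
      have hT₀1 : T₀ ≤ 1 := csSup_le ⟨0, hA0⟩ fun t ht => ht.1.2
      have hbelow : ∀ s, 0 ≤ s → s < T₀ → g s ≤ f x₀ := by
        intro s h0 hs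
        obtain ⟨t, htA, hst⟩ := exists_lt_of_lt_csSup ⟨0, hA0⟩ hs
        exact htA.2 s h0 hst.le
      have hT₀S : g T₀ ≤ f x₀ := by
        rcases eq_or_lt_of_le hT₀0 with h | h
        · rw [← h, hg0]; exact hxS
        · have htend : Filter.Tendsto g (nhdsWithin T₀ (Set.Iio T₀)) (nhds (g T₀)) :=
            (hgc.tendsto T₀).mono_left nhdsWithin_le_nhds
          refine le_of_tendsto htend ?_
          filter_upwards [Ioo_mem_nhdsLT_of_mem (Set.mem_Ioc.mpr ⟨h, le_rfl⟩)] with s hs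
          exact hbelow s hs.1.le hs.2
      have hT₀A : T₀ ∈ A := by
        refine ⟨⟨hT₀0, hT₀1⟩, fun s h0 h1 => ?_⟩
        rcases lt_or_eq_of_le h1 with h | h
        · exact hbelow s h0 h
        · rw [h]; exact hT₀S
      have hT₀eq : T₀ = 1 := by
        by_contra hne
        have hT₀lt : T₀ < 1 := lt_of_le_of_ne hT₀1 hne
        rcases eq_or_lt_of_le hT₀0 with hz | hpos
        · -- T₀ = 0 : use negative derivative at 0
          have hD0 : D < 0 := by
            nlinarith [hDneg, mul_pos hη0 (pow_pos hvpos 2)]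
          have hgd0 : HasDerivAt g D 0 := by
            have := hgd 0
            simpa [hD] using this
          have hslope := hasDerivAt_iff_tendsto_slope.mp hgd0
          have hev : ∀ᶠ s in nhdsWithin (0:ℝ) (Set.Ioi 0), slope g 0 s < 0 := by
            have hmono2 : nhdsWithin (0:ℝ) (Set.Ioi 0) ≤ nhdsWithin 0 {(0:ℝ)}ᶜ :=
              nhdsWithin_mono _ (fun s hs => ne_of_gt hs)
            exact (hslope.mono_left hmono2).eventually_lt_const hD0
          obtain ⟨u, hu, hsub⟩ := mem_nhdsGT_iff_exists_Ioo_subset.mp hev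
          have hu0 : (0:ℝ) < u := hu
          set t : ℝ := min 1 (u / 2) with ht
          have ht0 : 0 < t := lt_min one_pos (by linarith)
          have htA : t ∈ A := by
            refine ⟨⟨ht0.le, min_le_left _ _⟩, fun s h0 h1 => ?_⟩
            rcases eq_or_lt_of_le h0 with h | h
            · rw [← h, hg0]; exact hxS
            · have hsu : s < u := by
                have := le_trans h1 (min_le_right 1 (u/2)); linarith
              have hs : slope g 0 s < 0 := hsub ⟨h, hsu⟩
              rw [slope_def_field] at hs
              have hden : (0:ℝ) < s - 0 := by linarith
              have h' : g s - g 0 < 0 := by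
                by_contra h''
                push_neg at h''
                exact absurd hs (not_lt.mpr (div_nonneg h'' hden.le))
              have hfx : f x ≤ f x₀ := hxS
              rw [hg0] at h'
              linarith
          have := le_csSup hAbdd htA
          rw [← hT₀, ← hz] at this
          linarith
        · -- 0 < T₀ < 1 : strict descent at T₀, then continuity
          have hgT₀ := key T₀ hT₀0 hT₀1 hT₀A.2
          have hstrict : g T₀ < f x₀ := by
            have h1 : T₀ * D + Lf / 2 * T₀ ^ 2 * ‖v‖ ^ 2 < 0 := by
              have hLfη : T₀ * Lf < η := by nlinarith
              nlinarith [mul_le_mul_of_nonneg_left hDneg hT₀0,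
                mul_lt_mul_of_pos_left hLfη
                  (by positivity : (0:ℝ) < T₀ * ‖v‖ ^ 2 / 2)]
            linarith [hfx]
          have hopen : IsOpen {s : ℝ | g s < f x₀} := isOpen_lt hgc continuous_const
          obtain ⟨ε, hε, hball⟩ := Metric.isOpen_iff.mp hopen T₀ hstrict
          set t : ℝ := min 1 (T₀ + ε / 2) with ht
          have htT₀ : T₀ < t := lt_min hT₀lt (by linarith)
          have htA : t ∈ A := by
            refine ⟨⟨le_trans hT₀0 htT₀.le, min_le_left _ _⟩, fun s h0 h1 => ?_⟩
            rcases le_or_gt s T₀ with h | h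
            · exact hT₀A.2 s h0 h
            · have hst : s ≤ T₀ + ε / 2 := le_trans h1 (min_le_right _ _)
              have : s ∈ Metric.ball T₀ ε := by
                rw [Metric.mem_ball, Real.dist_eq, abs_of_pos (by linarith : (0:ℝ) < s - T₀)]
                linarith
              exact (hball this).le
          have := le_csSup hAbdd htA
          rw [← hT₀] at this
          linarith
      intro s h0 h1
      exact hT₀A.2 s h0 (by rw [hT₀eq]; exact h1)
  -- consequences
  have hsegxp : segment ℝ x p ⊆ {z | f z ≤ f x₀} := by
    have h1 : x + (1:ℝ) • v = p := by rw [hv]; module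
    intro z hz
    rw [← h1] at hz
    obtain ⟨r, hr, rfl⟩ := hsegsub 1 zero_le_one hz
    exact hray r hr.1 hr.2
  have hlip : ‖gradf F p - gradf F x‖ ≤ Lf * ‖p - x‖ := by
    rw [hLfdef]
    exact gradLip F hF f hf C hCconvex x₀ σ L hσ hL hJ hJLip x p hxC hp hsegxp
  -- first-order optimality of p
  have hfo : ∀ y ∈ C, 0 ≤ ⟪gradf F x, y - p⟫ + η * ⟪p - x, y - p⟫ := by
    intro y hy
    set c : ℝ := ⟪gradf F x, y - p⟫ + η * ⟪p - x, y - p⟫ with hc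
    set b : ℝ := η / 2 * ‖y - p‖ ^ 2 with hb
    have hbnn : 0 ≤ b := by positivity
    have hstep : ∀ t : ℝ, 0 < t → t ≤ 1 → 0 ≤ c + t * b := by
      intro t ht0 ht1
      have hzC : p + t • (y - p) ∈ C := by
        have : p + t • (y - p) = (1 - t) • p + t • y := by module
        rw [this]
        exact hCconvex hp hy (by linarith) ht0.le (by ring)
      have hm := hpmin _ hzC
      have hexp1 : p + t • (y - p) - x = (p - x) + t • (y - p) := by module
      have hexp2 : ‖(p - x) + t • (y - p)‖ ^ 2
          = ‖p - x‖ ^ 2 + 2 * (t * ⟪p - x, y - p⟫) + t ^ 2 * ‖y - p‖ ^ 2 := by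
        rw [norm_add_sq_real, real_inner_smul_right, norm_smul, Real.norm_eq_abs,
          abs_of_pos ht0, mul_pow]
      rw [hexp1, hexp2, inner_add_right, real_inner_smul_right] at hm
      have : 0 ≤ t * ⟪gradf F x, y - p⟫ + η / 2 *
          (2 * (t * ⟪p - x, y - p⟫) + t ^ 2 * ‖y - p‖ ^ 2) := by linarith
      rw [hc, hb]
      have h2 : 0 ≤ t * (⟪gradf F x, y - p⟫ + η * ⟪p - x, y - p⟫
          + t * (η / 2 * ‖y - p‖ ^ 2)) := by nlinarith
      nlinarith [mul_pos ht0 ht0]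
    by_contra hneg
    push_neg at hneg
    set t : ℝ := min 1 (-c / (2 * b + 1)) with ht
    have ht0 : 0 < t := lt_min one_pos (div_pos (by linarith) (by linarith))
    have := hstep t ht0 (min_le_left _ _)
    have htle : t ≤ -c / (2 * b + 1) := min_le_right _ _
    have h2b : (0:ℝ) < 2 * b + 1 := by linarith
    have htb : t * b ≤ (-c / (2 * b + 1)) * b :=
      mul_le_mul_of_nonneg_right htle hbnn
    have : (-c / (2 * b + 1)) * b < -c := by
      rw [div_mul_eq_mul_div, div_lt_iff₀ h2b]
      nlinarith
    linarith
  -- final computation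
  intro y hy
  have hfoy := hfo y hy
  have hcs1 : -(‖gradf F p - gradf F x‖ * ‖y - p‖) ≤ ⟪gradf F p - gradf F x, y - p⟫ := by
    have := abs_real_inner_le_norm (gradf F p - gradf F x) (y - p)
    cases abs_le.mp this with
    | intro h1 h2 => exact h1
  have hcs2 : ⟪p - x, y - p⟫ ≤ ‖p - x‖ * ‖y - p‖ := real_inner_le_norm _ _
  have hsplit : ⟪gradf F p, y - p⟫ =
      ⟪gradf F p - gradf F x, y - p⟫ + ⟪gradf F x, y - p⟫ := by
    rw [inner_sub_left]; ring
  have hnorm : ‖η • (x - p)‖ = η * ‖p - x‖ := by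
    rw [norm_smul, Real.norm_eq_abs, abs_of_pos hη0, norm_sub_rev]
  rw [hsplit, hnorm]
  have hyp : (0:ℝ) ≤ ‖y - p‖ := norm_nonneg _
  have hpx : (0:ℝ) ≤ ‖p - x‖ := norm_nonneg _
  nlinarith [mul_le_mul_of_nonneg_right hlip hyp,
    mul_le_mul_of_nonneg_right hcs2 (mul_nonneg hη0.le hyp),
    mul_le_mul_of_nonneg_right hη (mul_nonneg hpx hyp)]
end

section
/- Let x_k ∈ C, λ_k > 0, γ > 0, and x_{k+1} ∈ C satisfy f(x_{k+1}) ≤ m^k_{λ_k}(x_{k+1}) and m^k_{λ_k}(x_{k+1}) − m^k_{λ_k}(x_k) ≤ −D_γ(x_k). Then for every η ≥ γ, one has f(x_{k+1}) − f(x_k) ≤ −(1/(2η))‖G_η(x_k)‖². -/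
open scoped RealInnerProductSpace

/-- One-step decrease of f in terms of the gradient mapping.
Here `pγ = P_γ(x_k)` and `pη = P_η(x_k)` are the projected-gradient minimizers,
so that D_γ(x_k) = −(⟪∇f(x_k), pγ − x_k⟫ + (γ/2)‖pγ − x_k‖²) and
G_η(x_k) = η(x_k − pη). -/
theorem stmt_10 {d n : ℕ}
    (F : EuclideanSpace ℝ (Fin d) → EuclideanSpace ℝ (Fin n))
    (hF : ContDiff ℝ 1 F)
    (f : EuclideanSpace ℝ (Fin d) → ℝ)
    (hf : ∀ x, f x = (1 / 2) * ‖F x‖ ^ 2)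
    (C : Set (EuclideanSpace ℝ (Fin d)))
    (hCne : C.Nonempty) (hCclosed : IsClosed C) (hCconvex : Convex ℝ C)
    (xk : EuclideanSpace ℝ (Fin d)) (hxk : xk ∈ C)
    (lam γ : ℝ) (hlam : 0 < lam) (hγ : 0 < γ)
    (xk1 : EuclideanSpace ℝ (Fin d)) (hxk1 : xk1 ∈ C)
    (m : EuclideanSpace ℝ (Fin d) → ℝ)
    (hm : ∀ y, m y = (1 / 2) * ‖F xk + fderiv ℝ F xk (y - xk)‖ ^ 2
      + (lam / 2) * ‖y - xk‖ ^ 2)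
    (pγ : EuclideanSpace ℝ (Fin d)) (hpγ : pγ ∈ C)
    (hpγmin : ∀ y ∈ C,
      ⟪gradf F xk, pγ - xk⟫ + (γ / 2) * ‖pγ - xk‖ ^ 2 ≤
      ⟪gradf F xk, y - xk⟫ + (γ / 2) * ‖y - xk‖ ^ 2)
    (hmaj : f xk1 ≤ m xk1)
    (hdec : m xk1 - m xk ≤
      -(-(⟪gradf F xk, pγ - xk⟫ + (γ / 2) * ‖pγ - xk‖ ^ 2)))
    (η : ℝ) (hη : γ ≤ η)
    (pη : EuclideanSpace ℝ (Fin d)) (hpη : pη ∈ C)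
    (hpηmin : ∀ y ∈ C,
      ⟪gradf F xk, pη - xk⟫ + (η / 2) * ‖pη - xk‖ ^ 2 ≤
      ⟪gradf F xk, y - xk⟫ + (η / 2) * ‖y - xk‖ ^ 2) :
    f xk1 - f xk ≤ -((1 / (2 * η)) * ‖η • (xk - pη)‖ ^ 2) := by
  have hηpos : 0 < η := lt_of_lt_of_le hγ hη
  set g := gradf F xk with hg
  set v := xk - pη with hv
  -- variational inequality: ⟪g, v⟫ ≥ η ‖v‖²
  have key : ∀ t : ℝ, 0 < t → t ≤ 1 →
      0 ≤ (⟪g, v⟫ - η * ‖v‖ ^ 2) + t * ((η / 2) * ‖v‖ ^ 2) := by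
    intro t ht ht1
    have hy : pη + t • v ∈ C := by
      have h := hCconvex hpη hxk (by linarith : (0:ℝ) ≤ 1 - t) ht.le (by ring)
      have : (1 - t) • pη + t • xk = pη + t • v := by
        rw [hv]; module
      rwa [this] at h
    have h := hpηmin _ hy
    have e1 : pη + t • v - xk = (t - 1) • v := by rw [hv]; module
    have e2 : pη - xk = (-1 : ℝ) • v := by rw [hv]; module
    rw [e1, e2, real_inner_smul_right, real_inner_smul_right, norm_smul,
      norm_smul] at h
    simp only [Real.norm_eq_abs, mul_pow, sq_abs] at h
    nlinarith [h]
  have hA : η * ‖v‖ ^ 2 ≤ ⟪g, v⟫ := by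
    by_contra hcon
    push_neg at hcon
    set A := ⟪g, v⟫ - η * ‖v‖ ^ 2 with hAdef
    set B := (η / 2) * ‖v‖ ^ 2 with hBdef
    have hApos : A < 0 := by rw [hAdef]; linarith
    have hB : 0 ≤ B := by positivity
    set t : ℝ := min 1 (-A / (2 * (B + 1))) with htdef
    have ht0 : 0 < t := by
      apply lt_min one_pos
      exact div_pos (by linarith) (by linarith)
    have ht1 : t ≤ 1 := min_le_left _ _
    have htc : t ≤ -A / (2 * (B + 1)) := min_le_right _ _
    have hk := key t ht0 ht1
    have htB : t * B ≤ (-A / (2 * (B + 1))) * B := by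
      exact mul_le_mul_of_nonneg_right htc hB
    have hfrac : (-A / (2 * (B + 1))) * B < -A := by
      rw [div_mul_eq_mul_div, div_lt_iff₀ (by linarith : (0:ℝ) < 2 * (B + 1))]
      nlinarith
    linarith
  -- m xk = f xk
  have hmxk : m xk = f xk := by
    rw [hm, hf]; simp
  -- norm identities
  have hnorm : ‖pη - xk‖ = ‖v‖ := by rw [hv, norm_sub_rev]
  have hinner : ⟪g, pη - xk⟫ = -⟪g, v⟫ := by
    rw [hv, show pη - xk = -(xk - pη) by abel, inner_neg_right]
  -- chain of inequalities
  have h1 : f xk1 - f xk ≤ ⟪g, pγ - xk⟫ + (γ / 2) * ‖pγ - xk‖ ^ 2 := by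
    rw [← hmxk]
    have := hdec
    rw [neg_neg] at this
    linarith
  have h2 : ⟪g, pγ - xk⟫ + (γ / 2) * ‖pγ - xk‖ ^ 2 ≤
      ⟪g, pη - xk⟫ + (γ / 2) * ‖pη - xk‖ ^ 2 := hpγmin pη hpη
  have h3 : ⟪g, pη - xk⟫ + (γ / 2) * ‖pη - xk‖ ^ 2 ≤
      ⟪g, pη - xk⟫ + (η / 2) * ‖pη - xk‖ ^ 2 := by
    nlinarith [sq_nonneg ‖pη - xk‖]
  have h4 : ⟪g, pη - xk⟫ + (η / 2) * ‖pη - xk‖ ^ 2 ≤ -((η / 2) * ‖v‖ ^ 2) := by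
    rw [hinner, hnorm]; linarith
  have hG : ‖η • (xk - pη)‖ ^ 2 = η ^ 2 * ‖v‖ ^ 2 := by
    rw [← hv, norm_smul, Real.norm_eq_abs, mul_pow, sq_abs]
  rw [hG]
  have : -((1 / (2 * η)) * (η ^ 2 * ‖v‖ ^ 2)) = -((η / 2) * ‖v‖ ^ 2) := by
    field_simp
  rw [this]
  linarith
end

section
/- Let C = ℝ^d (the unconstrained case, so that for every η > 0 and x, G_η(x) = ∇f(x)). Let {x_k} ⊆ ℝ^d and {λ_k} ⊆ (0, ∞) be sequences starting at x₀ and let γ > 0 be such that for every k ≥ 0, f(x_{k+1}) ≤ m^k_{λ_k}(x_{k+1}) (where m^k denotes the model at x_k) and m^k_{λ_k}(x_{k+1}) − m^k_{λ_k}(x_k) ≤ −D_γ(x_k), where in this case D_γ(x) = (1/(2γ))‖∇f(x)‖². Then for every ε > 0, every η ≥ γ, and every positive integer K ≥ 2η f(x₀)/ε², there exists k < K such that ‖∇f(x_k)‖ ≤ ε. -/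
open scoped RealInnerProductSpace

/-- Global O(ε⁻²) iteration complexity of the LM method in the
unconstrained case C = ℝ^d, where G_η(x) = ∇f(x) and
D_γ(x) = (1/(2γ))‖∇f(x)‖². -/
theorem stmt_12 {d n : ℕ}
    (F : EuclideanSpace ℝ (Fin d) → EuclideanSpace ℝ (Fin n))
    (hF : ContDiff ℝ 1 F)
    (f : EuclideanSpace ℝ (Fin d) → ℝ)
    (hf : ∀ z, f z = (1 / 2) * ‖F z‖ ^ 2)
    (x : ℕ → EuclideanSpace ℝ (Fin d))
    (lam : ℕ → ℝ) (hlam : ∀ k, 0 < lam k)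
    (γ : ℝ) (hγ : 0 < γ)
    (m : ℕ → EuclideanSpace ℝ (Fin d) → ℝ)
    (hm : ∀ k y, m k y =
      (1 / 2) * ‖F (x k) + fderiv ℝ F (x k) (y - x k)‖ ^ 2
      + (lam k / 2) * ‖y - x k‖ ^ 2)
    (hmaj : ∀ k, f (x (k + 1)) ≤ m k (x (k + 1)))
    (hdec : ∀ k, m k (x (k + 1)) - m k (x k) ≤
      -((1 / (2 * γ)) * ‖gradf F (x k)‖ ^ 2))
    (ε : ℝ) (hε : 0 < ε)
    (η : ℝ) (hη : γ ≤ η)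
    (K : ℕ) (hK0 : 0 < K) (hK : 2 * η * f (x 0) / ε ^ 2 ≤ K) :
    ∃ k < K, ‖gradf F (x k)‖ ≤ ε := by
  have hη0 : 0 < η := lt_of_lt_of_le hγ hη
  have hfnn : ∀ z, 0 ≤ f z := by
    intro z; rw [hf]; positivity
  have hmk : ∀ k, m k (x k) = f (x k) := by
    intro k
    rw [hm, hf]
    simp
  have step : ∀ k, f (x (k + 1)) + (1 / (2 * γ)) * ‖gradf F (x k)‖ ^ 2 ≤ f (x k) := by
    intro k
    have h1 := hmaj k
    have h2 := hdec k
    have h3 := hmk k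
    linarith
  have sum_le : ∀ N : ℕ,
      (∑ k ∈ Finset.range N, (1 / (2 * γ)) * ‖gradf F (x k)‖ ^ 2) ≤ f (x 0) - f (x N) := by
    intro N
    induction N with
    | zero => simp
    | succ N ih =>
      rw [Finset.sum_range_succ]
      have := step N
      linarith
  by_contra h
  push_neg at h
  have each : ∀ k ∈ Finset.range K,
      ε ^ 2 / (2 * η) < (1 / (2 * γ)) * ‖gradf F (x k)‖ ^ 2 := by
    intro k hk
    have hgk : ε < ‖gradf F (x k)‖ := h k (Finset.mem_range.mp hk)
    have h2 : ε ^ 2 < ‖gradf F (x k)‖ ^ 2 := by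
      have := pow_lt_pow_left₀ hgk (le_of_lt hε) (n := 2) (by norm_num)
      exact this
    have h3 : ε ^ 2 / (2 * η) ≤ ε ^ 2 / (2 * γ) := by
      apply div_le_div_of_nonneg_left (by positivity) (by linarith) (by linarith)
    calc ε ^ 2 / (2 * η) ≤ ε ^ 2 / (2 * γ) := h3
      _ < ‖gradf F (x k)‖ ^ 2 / (2 * γ) := by gcongr
      _ = (1 / (2 * γ)) * ‖gradf F (x k)‖ ^ 2 := by ring
  have hsum : (K : ℝ) * (ε ^ 2 / (2 * η)) <
      ∑ k ∈ Finset.range K, (1 / (2 * γ)) * ‖gradf F (x k)‖ ^ 2 := by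
    calc (K : ℝ) * (ε ^ 2 / (2 * η))
        = ∑ _k ∈ Finset.range K, ε ^ 2 / (2 * η) := by
          rw [Finset.sum_const, Finset.card_range, nsmul_eq_mul]
      _ < _ := Finset.sum_lt_sum_of_nonempty (Finset.nonempty_range_iff.mpr hK0.ne') each
  have h1 := sum_le K
  have h2 := hfnn (x K)
  have h3 : f (x 0) ≤ (K : ℝ) * ε ^ 2 / (2 * η) := by
    rw [div_le_iff₀ (by positivity)] at hK
    rw [le_div_iff₀ (by positivity)]
    linarith
  rw [mul_div_assoc] at h3
  linarith
end

section
/- Assume X* := {x ∈ C : F(x) = 0} is nonempty, fix x* ∈ X*, let r > 0, and let B(r) be the closed ball of radius r centered at x*. Assume there are constants c, L, σ > 0 such that c·dist(x) ≤ ‖F(x)‖ for all x ∈ C ∩ B(r) (local error bound), ‖J(y) − J(x)‖ ≤ L‖y − x‖ for all x, y ∈ C ∩ B(r), and ‖F(y) − F(x)‖ ≤ σ‖y − x‖ for all x, y ∈ C ∩ B(r). Let x_k ∈ C ∩ B(r/2), let x̃_k ∈ X* be a closest solution to x_k (i.e., ‖x̃_k − x_k‖ = dist(x_k)), let μ_k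 > 0, ρ ≥ 0, and let y_k ∈ C satisfy ⟨∇m^k_{μ_k}(y_k), x − y_k⟩ ≥ −ρ μ_k ‖F(x_k)‖ ‖x − y_k‖ for all x ∈ C. Then ‖y_k − x_k‖² ≤ (1 + ρ²σ²) dist(x_k)² + (L²/(8μ_k)) dist(x_k)⁴. -/
open scoped RealInnerProductSpace

lemma taylor_half {d n : ℕ} {F : EuclideanSpace ℝ (Fin d) → EuclideanSpace ℝ (Fin n)}
    (hF : ContDiff ℝ 1 F) (x y : EuclideanSpace ℝ (Fin d)) {L : ℝ}
    (hL : 0 ≤ L)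
    (hlip : ∀ t ∈ Set.Icc (0:ℝ) 1,
      ‖fderiv ℝ F (x + t • (y - x)) - fderiv ℝ F x‖ ≤ L * (t * ‖y - x‖)) :
    ‖F y - F x - fderiv ℝ F x (y - x)‖ ≤ L / 2 * ‖y - x‖ ^ 2 := by
  set v := y - x with hv
  set g : ℝ → EuclideanSpace ℝ (Fin n) :=
    fun t => F (x + t • v) - t • (fderiv ℝ F x v) with hg
  have hderiv : ∀ t : ℝ, HasDerivAt g
      ((fderiv ℝ F (x + t • v) - fderiv ℝ F x) v) t := by
    intro t
    have h1 : HasDerivAt (fun t : ℝ => x + t • v) v t := by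
      simpa using ((hasDerivAt_id t).smul_const v).const_add x
    have h2 : HasFDerivAt F (fderiv ℝ F (x + t • v)) (x + t • v) :=
      ((hF.differentiable one_ne_zero) _).hasFDerivAt
    have h3 : HasDerivAt (fun t : ℝ => F (x + t • v)) (fderiv ℝ F (x + t • v) v) t :=
      h2.comp_hasDerivAt t h1
    have h4 : HasDerivAt (fun t : ℝ => t • (fderiv ℝ F x v)) (fderiv ℝ F x v) t := by
      simpa using (hasDerivAt_id t).smul_const (fderiv ℝ F x v)
    rw [ContinuousLinearMap.sub_apply]; exact h3.sub h4
  have hFTC : ∫ t in (0:ℝ)..1, (fderiv ℝ F (x + t • v) - fderiv ℝ F x) v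
      = g 1 - g 0 := by
    apply intervalIntegral.integral_eq_sub_of_hasDerivAt (fun t _ => hderiv t)
    apply ContinuousOn.intervalIntegrable
    have hc : Continuous fun t : ℝ => (fderiv ℝ F (x + t • v) - fderiv ℝ F x) v := by
      have : Continuous fun t : ℝ => fderiv ℝ F (x + t • v) :=
        (hF.continuous_fderiv one_ne_zero).comp (by continuity)
      exact ((this.sub continuous_const).clm_apply continuous_const)
    exact hc.continuousOn
  have hg1 : g 1 - g 0 = F y - F x - fderiv ℝ F x v := by
    simp only [hg, hv, one_smul, zero_smul, map_sub, sub_zero, add_sub_cancel]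
    abel
  have hbound : ‖∫ t in (0:ℝ)..1, (fderiv ℝ F (x + t • v) - fderiv ℝ F x) v‖
      ≤ |∫ t in (0:ℝ)..1, L * (t * ‖v‖) * ‖v‖| := by
    apply intervalIntegral.norm_integral_le_abs_of_norm_le
    · rw [Set.uIoc_of_le (by norm_num : (0:ℝ) ≤ 1)]
      refine (MeasureTheory.ae_restrict_iff' measurableSet_Ioc).2 ?_
      filter_upwards with t ht
      calc ‖(fderiv ℝ F (x + t • v) - fderiv ℝ F x) v‖
          ≤ ‖fderiv ℝ F (x + t • v) - fderiv ℝ F x‖ * ‖v‖ :=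
            ContinuousLinearMap.le_opNorm _ _
        _ ≤ L * (t * ‖v‖) * ‖v‖ := by
            gcongr; exact hlip t ⟨le_of_lt ht.1, ht.2⟩
    · apply ContinuousOn.intervalIntegrable; fun_prop
  have hint : ∫ t in (0:ℝ)..1, L * (t * ‖v‖) * ‖v‖ = L / 2 * ‖v‖ ^ 2 := by
    have : (fun t : ℝ => L * (t * ‖v‖) * ‖v‖) = fun t : ℝ => t * (L * ‖v‖ * ‖v‖) := by
      funext t; ring
    rw [this, intervalIntegral.integral_mul_const, integral_id]
    ring
  rw [hFTC, hg1, hint] at hbound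
  rwa [abs_of_nonneg (by positivity)] at hbound

set_option maxHeartbeats 1000000 in
/-- Bound on the inexact LM step length in terms of the distance
to the solution set.  Here ∇m^k_{μ_k}(y) = J(x_k)ᵀ(F(x_k) + J(x_k)(y − x_k))
+ μ_k (y − x_k), written out explicitly in the hypothesis `hyk`. -/
theorem stmt_14 {d n : ℕ}
    (F : EuclideanSpace ℝ (Fin d) → EuclideanSpace ℝ (Fin n))
    (hF : ContDiff ℝ 1 F)
    (C : Set (EuclideanSpace ℝ (Fin d)))
    (hCne : C.Nonempty) (hCclosed : IsClosed C) (hCconvex : Convex ℝ C)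
    (Xstar : Set (EuclideanSpace ℝ (Fin d)))
    (hXstar : Xstar = {x ∈ C | F x = 0}) (hXstarNe : Xstar.Nonempty)
    (xstar : EuclideanSpace ℝ (Fin d)) (hxstar : xstar ∈ Xstar)
    (r : ℝ) (hr : 0 < r)
    (c L σ : ℝ) (hc : 0 < c) (hL : 0 < L) (hσ : 0 < σ)
    (hEB : ∀ x ∈ C ∩ Metric.closedBall xstar r,
      c * Metric.infDist x Xstar ≤ ‖F x‖)
    (hJLip : ∀ x ∈ C ∩ Metric.closedBall xstar r,
      ∀ y ∈ C ∩ Metric.closedBall xstar r,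
      ‖fderiv ℝ F y - fderiv ℝ F x‖ ≤ L * ‖y - x‖)
    (hFLip : ∀ x ∈ C ∩ Metric.closedBall xstar r,
      ∀ y ∈ C ∩ Metric.closedBall xstar r,
      ‖F y - F x‖ ≤ σ * ‖y - x‖)
    (xk : EuclideanSpace ℝ (Fin d))
    (hxk : xk ∈ C ∩ Metric.closedBall xstar (r / 2))
    (xtk : EuclideanSpace ℝ (Fin d)) (hxtk : xtk ∈ Xstar)
    (hxtkdist : ‖xtk - xk‖ = Metric.infDist xk Xstar)
    (μ : ℝ) (hμ : 0 < μ) (ρ : ℝ) (hρ : 0 ≤ ρ)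
    (yk : EuclideanSpace ℝ (Fin d)) (hykC : yk ∈ C)
    (hyk : ∀ x ∈ C,
      ⟪ContinuousLinearMap.adjoint (fderiv ℝ F xk)
          (F xk + fderiv ℝ F xk (yk - xk)) + μ • (yk - xk), x - yk⟫ ≥
        -(ρ * μ * ‖F xk‖) * ‖x - yk‖) :
    ‖yk - xk‖ ^ 2 ≤ (1 + ρ ^ 2 * σ ^ 2) * Metric.infDist xk Xstar ^ 2
      + (L ^ 2 / (8 * μ)) * Metric.infDist xk Xstar ^ 4 := by
  obtain ⟨hxkC, hxkB2⟩ := hxk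
  have hxkB2' : dist xk xstar ≤ r / 2 := Metric.mem_closedBall.mp hxkB2
  have hxkB : xk ∈ Metric.closedBall xstar r := by
    rw [Metric.mem_closedBall]; linarith
  have hxtkC : xtk ∈ C := by rw [hXstar] at hxtk; exact hxtk.1
  have hFxtk : F xtk = 0 := by rw [hXstar] at hxtk; exact hxtk.2
  have hvb : ‖xtk - xk‖ ≤ r / 2 := by
    rw [hxtkdist]
    exact le_trans (Metric.infDist_le_dist_of_mem hxstar) hxkB2'
  have hxtkB : xtk ∈ Metric.closedBall xstar r := by
    rw [Metric.mem_closedBall]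
    calc dist xtk xstar ≤ dist xtk xk + dist xk xstar := dist_triangle _ _ _
      _ ≤ r / 2 + r / 2 := by
          refine add_le_add ?_ hxkB2'
          rw [dist_eq_norm]; exact hvb
      _ = r := by ring
  -- the segment from xk to xtk lies in C ∩ B(r)
  have hseg : ∀ t ∈ Set.Icc (0:ℝ) 1,
      xk + t • (xtk - xk) ∈ C ∩ Metric.closedBall xstar r := by
    intro t ht
    have heq : xk + t • (xtk - xk) = (1 - t) • xk + t • xtk := by
      rw [smul_sub]; module
    rw [heq]
    constructor
    · exact hCconvex hxkC hxtkC (by linarith [ht.2]) ht.1 (by ring)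
    · exact convex_closedBall xstar r hxkB hxtkB (by linarith [ht.2]) ht.1 (by ring)
  have hlip : ∀ t ∈ Set.Icc (0:ℝ) 1,
      ‖fderiv ℝ F (xk + t • (xtk - xk)) - fderiv ℝ F xk‖ ≤ L * (t * ‖xtk - xk‖) := by
    intro t ht
    have h := hJLip xk ⟨hxkC, hxkB⟩ _ (hseg t ht)
    have heq : xk + t • (xtk - xk) - xk = t • (xtk - xk) := by abel
    rw [heq, norm_smul, Real.norm_eq_abs, abs_of_nonneg ht.1] at h
    linarith
  have hw := taylor_half hF xk xtk hL.le hlip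
  rw [hFxtk] at hw
  have hneg : (0 : EuclideanSpace ℝ (Fin n)) - F xk - fderiv ℝ F xk (xtk - xk)
      = -(F xk + fderiv ℝ F xk (xtk - xk)) := by abel
  rw [hneg, norm_neg] at hw
  -- hw : ‖F xk + J v‖ ≤ L/2 * ‖v‖^2
  have hFk : ‖F xk‖ ≤ σ * ‖xtk - xk‖ := by
    have h := hFLip xtk ⟨hxtkC, hxtkB⟩ xk ⟨hxkC, hxkB⟩
    rw [hFxtk, sub_zero, norm_sub_rev] at h
    exact h
  have hVI := hyk xtk hxtkC
  set J := fderiv ℝ F xk with hJ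
  have hz : xtk - yk = (xtk - xk) - (yk - xk) := by abel
  rw [hz] at hVI
  obtain ⟨v, hv⟩ : ∃ v, v = xtk - xk := ⟨_, rfl⟩
  obtain ⟨u, hu⟩ : ∃ u, u = yk - xk := ⟨_, rfl⟩
  rw [← hv, ← hu] at hVI
  rw [← hv] at hw hFk hxtkdist
  rw [← hxtkdist, ← hu]
  have hkey : F xk + J u = (F xk + J v) - J (v - u) := by
    rw [map_sub]; abel
  have hexp : ⟪ContinuousLinearMap.adjoint J (F xk + J u) + μ • u, v - u⟫
      = ⟪F xk + J v, J (v - u)⟫ - ‖J (v - u)‖ ^ 2 + μ * (⟪u, v⟫ - ‖u‖ ^ 2) := by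
    rw [inner_add_left, ContinuousLinearMap.adjoint_inner_left, real_inner_smul_left,
      hkey, inner_sub_left, inner_sub_right]
    rw [real_inner_self_eq_norm_sq, real_inner_self_eq_norm_sq]
  rw [hexp] at hVI
  have hA : ⟪F xk + J v, J (v - u)⟫ ≤ ‖F xk + J v‖ * ‖J (v - u)‖ :=
    real_inner_le_norm _ _
  have hZsq : ‖v - u‖ ^ 2 = ‖v‖ ^ 2 - 2 * ⟪u, v⟫ + ‖u‖ ^ 2 := by
    rw [norm_sub_sq_real, real_inner_comm]
  -- pass to scalar variables
  obtain ⟨A, hA'⟩ : ∃ A, A = ⟪F xk + J v, J (v - u)⟫ := ⟨_, rfl⟩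
  obtain ⟨ip, hip⟩ : ∃ ip, ip = ⟪u, v⟫ := ⟨_, rfl⟩
  obtain ⟨W, hW'⟩ : ∃ W, W = ‖F xk + J v‖ := ⟨_, rfl⟩
  obtain ⟨T, hT'⟩ : ∃ T, T = ‖J (v - u)‖ := ⟨_, rfl⟩
  obtain ⟨Z, hZ'⟩ : ∃ Z, Z = ‖v - u‖ := ⟨_, rfl⟩
  obtain ⟨b, hb'⟩ : ∃ b, b = ‖v‖ := ⟨_, rfl⟩
  obtain ⟨a, ha'⟩ : ∃ a, a = ‖u‖ := ⟨_, rfl⟩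
  obtain ⟨fk, hfk'⟩ : ∃ fk, fk = ‖F xk‖ := ⟨_, rfl⟩
  rw [← hA', ← hip, ← hT', ← hZ', ← hfk', ← ha'] at hVI
  rw [← hA', ← hW', ← hT'] at hA
  rw [← hZ', ← hip, ← hb', ← ha'] at hZsq
  rw [← hW', ← hb'] at hw
  rw [← hfk', ← hb'] at hFk
  rw [← hb'] at hxtkdist
  rw [← ha']
  have hb0 : (0:ℝ) ≤ b := hb' ▸ norm_nonneg _
  have ht0 : (0:ℝ) ≤ T := hT' ▸ norm_nonneg _
  have hZ0 : (0:ℝ) ≤ Z := hZ' ▸ norm_nonneg _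
  have hFk0 : (0:ℝ) ≤ fk := hfk' ▸ norm_nonneg _
  have hW0 : (0:ℝ) ≤ W := hW' ▸ norm_nonneg _
  -- the key scalar inequality
  have hmain : μ * a ^ 2 ≤ μ * ((1 + ρ ^ 2 * σ ^ 2) * b ^ 2) + L ^ 2 / 8 * b ^ 4 := by
    have h1 : A - T ^ 2 ≤ L ^ 2 / 16 * b ^ 4 := by
      nlinarith [sq_nonneg (W - 2 * T), mul_le_mul hw hw hW0 (by positivity)]
    have h2 : ρ * μ * fk * Z ≤ μ / 2 * (ρ ^ 2 * σ ^ 2 * b ^ 2 + Z ^ 2) := by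
      nlinarith [sq_nonneg (ρ * σ * b - Z),
        mul_le_mul_of_nonneg_left hFk hρ, mul_le_mul_of_nonneg_left
          (mul_le_mul_of_nonneg_left hFk hρ) (mul_nonneg hμ.le hZ0)]
    nlinarith [hVI, h1, h2, hZsq]
  have hre : μ * ((1 + ρ ^ 2 * σ ^ 2) * b ^ 2 + L ^ 2 / (8 * μ) * b ^ 4)
      = μ * ((1 + ρ ^ 2 * σ ^ 2) * b ^ 2) + L ^ 2 / 8 * b ^ 4 := by
    field_simp
  exact le_of_mul_le_mul_left (by rw [← hb', hre]; exact hmain) hμ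
end

section
/- Assume X* := {x ∈ C : F(x) = 0} is nonempty, fix x* ∈ X*, let r > 0, and let B(r) be the closed ball of radius r centered at x*. Assume there are constants c, L, σ > 0 such that c·dist(x) ≤ ‖F(x)‖ for all x ∈ C ∩ B(r) (local error bound), ‖J(x)‖ ≤ σ and ‖J(y) − J(x)‖ ≤ L‖y − x‖ for all x, y ∈ C ∩ B(r), and ‖F(y) − F(x)‖ ≤ σ‖y − x‖ for all x, y ∈ C ∩ B(r). Let x_k, x_{k+1} ∈ C ∩ B(r/2), and let constants M̄ > 0, ρ ≥ 0, C₁ > 0 and λ_k > 0 satisfy: λ_k ≤ M̄‖F(x_k)‖; ‖F(x_{k+1})‖ ≤ ‖F(x_k)‖; ‖x_{k+1} − x_k‖ ≤ C₁ dist(x_k); and ⟨∇m^k_{λ_k}(x_{k+1}), x − x_{k+1}⟩ ≥ −ρ λ_k ‖F(x_k)‖ ‖x − x_{k+1}‖ for all x ∈ C. Then c² dist(x_{k+1}) ≤ (σ²(ρM̄ + L/(2c)) + (LσC₁²)/2 + (L + M̄)σC₁) dist(x_k)². -/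
open scoped RealInnerProductSpace
open Set

lemma taylor_quad {E F' : Type*} [NormedAddCommGroup E] [NormedSpace ℝ E]
    [NormedAddCommGroup F'] [NormedSpace ℝ F']
    (f : E → F') (hf : Differentiable ℝ f) {s : Set E} (hs : Convex ℝ s)
    {L : ℝ} {x y : E} (hx : x ∈ s) (hy : y ∈ s)
    (hL : ∀ z ∈ s, ‖fderiv ℝ f z - fderiv ℝ f x‖ ≤ L * ‖z - x‖) :
    ‖f y - f x - fderiv ℝ f x (y - x)‖ ≤ L / 2 * ‖y - x‖ ^ 2 := by
  set v := y - x with hv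
  set g : ℝ → F' := fun t => f (x + t • v) - f x - t • (fderiv ℝ f x v) with hg
  have hmem : ∀ t ∈ Icc (0:ℝ) 1, x + t • v ∈ s := by
    intro t ht
    have h := hs hx hy (by linarith [ht.2] : (0:ℝ) ≤ 1 - t) ht.1 (by ring)
    have : (1 - t) • x + t • y = x + t • v := by
      simp only [hv, smul_sub, sub_smul, one_smul]; abel
    rwa [this] at h
  have hderiv : ∀ t : ℝ, HasDerivAt g (fderiv ℝ f (x + t • v) v - fderiv ℝ f x v) t := by
    intro t
    have h1 : HasDerivAt (fun t : ℝ => x + t • v) v t := by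
      simpa using ((hasDerivAt_id t).smul_const v).const_add x
    have h2 : HasDerivAt (fun t : ℝ => f (x + t • v)) (fderiv ℝ f (x + t • v) v) t :=
      (hf (x + t • v)).hasFDerivAt.comp_hasDerivAt t h1
    have h3 : HasDerivAt (fun t : ℝ => t • (fderiv ℝ f x v)) (fderiv ℝ f x v) t := by
      simpa using (hasDerivAt_id t).smul_const (fderiv ℝ f x v)
    exact (h2.sub_const (f x)).sub h3
  have key := image_norm_le_of_norm_deriv_right_le_deriv_boundary
    (f := g) (f' := fun t => fderiv ℝ f (x + t • v) v - fderiv ℝ f x v)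
    (a := 0) (b := 1)
    (fun t _ => (hderiv t).continuousAt.continuousWithinAt)
    (fun t ht => (hderiv t).hasDerivWithinAt)
    (B := fun t => L / 2 * ‖v‖ ^ 2 * t ^ 2) (B' := fun t => L * ‖v‖ ^ 2 * t)
    (by simp [hg])
    (fun t => by
      have : HasDerivAt (fun t : ℝ => L / 2 * ‖v‖ ^ 2 * t ^ 2) (L / 2 * ‖v‖ ^ 2 * (2 * t)) t := by
        exact (hasDerivAt_pow 2 t).const_mul _ |>.congr_deriv (by ring_nf)
      convert this using 1; ring)
    (fun t ht => by
      have hz : x + t • v ∈ s := hmem t ⟨ht.1, le_of_lt ht.2⟩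
      have h1 := hL _ hz
      have h2 : ‖(x + t • v) - x‖ = t * ‖v‖ := by
        rw [add_sub_cancel_left, norm_smul, Real.norm_eq_abs, abs_of_nonneg ht.1]
      calc ‖fderiv ℝ f (x + t • v) v - fderiv ℝ f x v‖
          = ‖(fderiv ℝ f (x + t • v) - fderiv ℝ f x) v‖ := by simp
        _ ≤ ‖fderiv ℝ f (x + t • v) - fderiv ℝ f x‖ * ‖v‖ :=
            ContinuousLinearMap.le_opNorm _ _
        _ ≤ L * ‖(x + t • v) - x‖ * ‖v‖ := by
            apply mul_le_mul_of_nonneg_right h1 (norm_nonneg _)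
        _ = L * ‖v‖ ^ 2 * t := by rw [h2]; ring)
  have h := key (Set.right_mem_Icc.mpr zero_le_one)
  have hxy : x + v = y := by simp [hv]
  rw [hg] at h
  simp only [one_smul, hxy] at h
  simpa using h

set_option maxHeartbeats 4000000 in
/-- Quadratic decrease of the distance to the solution set for
one inexact LM step.  Here ∇m^k_{λ_k}(y) = J(x_k)ᵀ(F(x_k) + J(x_k)(y − x_k))
+ λ_k (y − x_k), written out explicitly in the hypothesis `hineq`. -/
theorem stmt_15 {d n : ℕ}
    (F : EuclideanSpace ℝ (Fin d) → EuclideanSpace ℝ (Fin n))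
    (hF : ContDiff ℝ 1 F)
    (C : Set (EuclideanSpace ℝ (Fin d)))
    (hCne : C.Nonempty) (hCclosed : IsClosed C) (hCconvex : Convex ℝ C)
    (Xstar : Set (EuclideanSpace ℝ (Fin d)))
    (hXstar : Xstar = {x ∈ C | F x = 0}) (hXstarNe : Xstar.Nonempty)
    (xstar : EuclideanSpace ℝ (Fin d)) (hxstar : xstar ∈ Xstar)
    (r : ℝ) (hr : 0 < r)
    (c L σ : ℝ) (hc : 0 < c) (hL : 0 < L) (hσ : 0 < σ)
    (hEB : ∀ x ∈ C ∩ Metric.closedBall xstar r,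
      c * Metric.infDist x Xstar ≤ ‖F x‖)
    (hJbd : ∀ x ∈ C ∩ Metric.closedBall xstar r, ‖fderiv ℝ F x‖ ≤ σ)
    (hJLip : ∀ x ∈ C ∩ Metric.closedBall xstar r,
      ∀ y ∈ C ∩ Metric.closedBall xstar r,
      ‖fderiv ℝ F y - fderiv ℝ F x‖ ≤ L * ‖y - x‖)
    (hFLip : ∀ x ∈ C ∩ Metric.closedBall xstar r,
      ∀ y ∈ C ∩ Metric.closedBall xstar r,
      ‖F y - F x‖ ≤ σ * ‖y - x‖)
    (xk xk1 : EuclideanSpace ℝ (Fin d))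
    (hxk : xk ∈ C ∩ Metric.closedBall xstar (r / 2))
    (hxk1 : xk1 ∈ C ∩ Metric.closedBall xstar (r / 2))
    (Mbar ρ C₁ lam : ℝ)
    (hMbar : 0 < Mbar) (hρ : 0 ≤ ρ) (hC₁ : 0 < C₁) (hlam : 0 < lam)
    (hlamle : lam ≤ Mbar * ‖F xk‖)
    (hFdec : ‖F xk1‖ ≤ ‖F xk‖)
    (hstep : ‖xk1 - xk‖ ≤ C₁ * Metric.infDist xk Xstar)
    (hineq : ∀ x ∈ C,
      ⟪ContinuousLinearMap.adjoint (fderiv ℝ F xk)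
          (F xk + fderiv ℝ F xk (xk1 - xk)) + lam • (xk1 - xk), x - xk1⟫ ≥
        -(ρ * lam * ‖F xk‖) * ‖x - xk1‖) :
    c ^ 2 * Metric.infDist xk1 Xstar ≤
      (σ ^ 2 * (ρ * Mbar + L / (2 * c)) + (L * σ * C₁ ^ 2) / 2
        + (L + Mbar) * σ * C₁) * Metric.infDist xk Xstar ^ 2 := by
  classical
  set D := Metric.infDist xk Xstar with hDdef
  set D' := Metric.infDist xk1 Xstar with hD'def
  have hdiff : Differentiable ℝ F := hF.differentiable one_ne_zero
  have hXclosed : IsClosed Xstar := by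
    rw [hXstar]
    exact hCclosed.inter (isClosed_singleton.preimage hdiff.continuous)
  have hXsubC : Xstar ⊆ C := by rw [hXstar]; intro x hx; exact hx.1
  have hFzero : ∀ x ∈ Xstar, F x = 0 := by rw [hXstar]; intro x hx; exact hx.2
  have hr2 : r / 2 ≤ r := by linarith
  set S : Set (EuclideanSpace ℝ (Fin d)) := C ∩ Metric.closedBall xstar r with hSdef
  have hSconv : Convex ℝ S := hCconvex.inter (convex_closedBall _ _)
  have hxkS : xk ∈ S := ⟨hxk.1, Metric.closedBall_subset_closedBall hr2 hxk.2⟩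
  have hxk1S : xk1 ∈ S := ⟨hxk1.1, Metric.closedBall_subset_closedBall hr2 hxk1.2⟩
  -- projections onto Xstar
  obtain ⟨xb, hxbX, hxbD⟩ := hXclosed.exists_infDist_eq_dist hXstarNe xk
  obtain ⟨xb1, hxb1X, hxb1D⟩ := hXclosed.exists_infDist_eq_dist hXstarNe xk1
  have hDeq : D = ‖xk - xb‖ := by rw [hDdef, hxbD, dist_eq_norm]
  have hD'eq : D' = ‖xk1 - xb1‖ := by rw [hD'def, hxb1D, dist_eq_norm]
  have hDnn : 0 ≤ D := Metric.infDist_nonneg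
  have hD'nn : 0 ≤ D' := Metric.infDist_nonneg
  have hDhalf : D ≤ r / 2 := by
    rw [hDdef]
    calc Metric.infDist xk Xstar ≤ dist xk xstar := Metric.infDist_le_dist_of_mem hxstar
      _ ≤ r / 2 := hxk.2
  have hD'half : D' ≤ r / 2 := by
    rw [hD'def]
    calc Metric.infDist xk1 Xstar ≤ dist xk1 xstar := Metric.infDist_le_dist_of_mem hxstar
      _ ≤ r / 2 := hxk1.2
  have hxbS : xb ∈ S := by
    refine ⟨hXsubC hxbX, ?_⟩
    rw [Metric.mem_closedBall]
    calc dist xb xstar ≤ dist xb xk + dist xk xstar := dist_triangle _ _ _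
      _ ≤ D + r / 2 := by
          have : dist xb xk = D := by rw [dist_comm, ← hxbD, hDdef]
          rw [this]; linarith [Metric.mem_closedBall.mp hxk.2]
      _ ≤ r := by linarith
  have hxb1S : xb1 ∈ S := by
    refine ⟨hXsubC hxb1X, ?_⟩
    rw [Metric.mem_closedBall]
    calc dist xb1 xstar ≤ dist xb1 xk1 + dist xk1 xstar := dist_triangle _ _ _
      _ ≤ D' + r / 2 := by
          have : dist xb1 xk1 = D' := by rw [dist_comm, ← hxb1D, hD'def]
          rw [this]; linarith [Metric.mem_closedBall.mp hxk1.2]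
      _ ≤ r := by linarith
  -- basic norm bounds
  have hFk : ‖F xk‖ ≤ σ * D := by
    have h := hFLip xb hxbS xk hxkS
    rw [hFzero xb hxbX, sub_zero, ← hDeq] at h
    exact h
  have hFk1 : ‖F xk1‖ ≤ σ * D := hFdec.trans hFk
  have hEB1 : c * D' ≤ ‖F xk1‖ := hEB xk1 hxk1S
  have hsk : ‖xk1 - xk‖ ≤ C₁ * D := hstep
  have hlamD : lam ≤ Mbar * (σ * D) := by
    refine hlamle.trans ?_
    exact mul_le_mul_of_nonneg_left hFk hMbar.le
  -- notation for operators
  set J := fderiv ℝ F xk with hJdef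
  set J' := fderiv ℝ F xk1 with hJ'def
  set sk := xk1 - xk with hskdef
  set w := F xk + J sk with hwdef
  set u := F xk1 with hudef
  set z := xk1 - xb1 with hzdef
  set g := ContinuousLinearMap.adjoint J w + lam • sk with hgdef
  -- Taylor bounds
  have h6 : ‖u - w‖ ≤ L / 2 * ‖sk‖ ^ 2 := by
    have h := taylor_quad F hdiff hSconv hxkS hxk1S
      (fun z hz => hJLip xk hxkS z hz)
    have : u - w = F xk1 - F xk - J sk := by rw [hudef, hwdef]; abel
    rw [this]
    exact h
  have h7 : ‖u - J' z‖ ≤ L / 2 * D' ^ 2 := by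
    have h := taylor_quad F hdiff hSconv hxk1S hxb1S
      (fun z hz => hJLip xk1 hxk1S z hz)
    have hmap : J' (xb1 - xk1) = - J' z := by
      rw [← map_neg]; congr 1; rw [hzdef]; abel
    have hrw : F xb1 - F xk1 - J' (xb1 - xk1) = -(u - J' z) := by
      rw [hFzero xb1 hxb1X, hmap, hudef]; abel
    rw [hrw, norm_neg] at h
    have hnorm : ‖xb1 - xk1‖ = D' := by rw [hD'eq, norm_sub_rev]
    rw [hnorm] at h
    exact h
  -- gradient difference bound
  have hJ'bd : ‖J' - J‖ ≤ L * ‖sk‖ := hJLip xk hxkS xk1 hxk1S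
  have hJbd' : ‖J‖ ≤ σ := hJbd xk hxkS
  have hQ : ‖ContinuousLinearMap.adjoint J' u - g‖ ≤
      ((L + Mbar) * σ * C₁ + L * σ * C₁ ^ 2 / 2) * D ^ 2 := by
    have hdecomp : ContinuousLinearMap.adjoint J' u - g =
        ContinuousLinearMap.adjoint (J' - J) u
          + ContinuousLinearMap.adjoint J (u - w) - lam • sk := by
      rw [hgdef, map_sub, map_sub]
      simp only [ContinuousLinearMap.sub_apply]
      abel
    have hb1 : ‖ContinuousLinearMap.adjoint (J' - J) u‖ ≤ (L * ‖sk‖) * ‖u‖ := by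
      calc ‖ContinuousLinearMap.adjoint (J' - J) u‖
          ≤ ‖ContinuousLinearMap.adjoint (J' - J)‖ * ‖u‖ :=
            ContinuousLinearMap.le_opNorm _ _
        _ = ‖J' - J‖ * ‖u‖ := by
            rw [LinearIsometryEquiv.norm_map ContinuousLinearMap.adjoint]
        _ ≤ (L * ‖sk‖) * ‖u‖ := mul_le_mul_of_nonneg_right hJ'bd (norm_nonneg _)
    have hb2 : ‖ContinuousLinearMap.adjoint J (u - w)‖ ≤ σ * (L / 2 * ‖sk‖ ^ 2) := by
      calc ‖ContinuousLinearMap.adjoint J (u - w)‖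
          ≤ ‖ContinuousLinearMap.adjoint J‖ * ‖u - w‖ :=
            ContinuousLinearMap.le_opNorm _ _
        _ = ‖J‖ * ‖u - w‖ := by
            rw [LinearIsometryEquiv.norm_map ContinuousLinearMap.adjoint]
        _ ≤ σ * (L / 2 * ‖sk‖ ^ 2) := by
            apply mul_le_mul hJbd' h6 (norm_nonneg _) hσ.le
    have hb3 : ‖lam • sk‖ ≤ lam * ‖sk‖ := by
      rw [norm_smul, Real.norm_eq_abs, abs_of_pos hlam]
    have htri0 : ∀ a b cv : EuclideanSpace ℝ (Fin d), ‖a + b - cv‖ ≤ ‖a‖ + ‖b‖ + ‖cv‖ := by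
      intro a b cv
      calc ‖a + b - cv‖ ≤ ‖a + b‖ + ‖cv‖ := norm_sub_le _ _
        _ ≤ ‖a‖ + ‖b‖ + ‖cv‖ := by linarith [norm_add_le a b]
    have htri : ‖ContinuousLinearMap.adjoint J' u - g‖ ≤
        (L * ‖sk‖) * ‖u‖ + σ * (L / 2 * ‖sk‖ ^ 2) + lam * ‖sk‖ := by
      rw [hdecomp]
      have h0 := htri0 (ContinuousLinearMap.adjoint (J' - J) u)
        (ContinuousLinearMap.adjoint J (u - w)) (lam • sk)
      linarith
    refine htri.trans ?_
    have hsknn : (0:ℝ) ≤ ‖sk‖ := norm_nonneg _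
    have hunn : (0:ℝ) ≤ ‖u‖ := norm_nonneg _
    have hCD : (0:ℝ) ≤ C₁ * D := mul_nonneg hC₁.le hDnn
    have t1 : (L * ‖sk‖) * ‖u‖ ≤ L * σ * C₁ * D ^ 2 := by
      have p : ‖sk‖ * ‖u‖ ≤ (C₁ * D) * (σ * D) := mul_le_mul hsk hFk1 hunn hCD
      have q := mul_le_mul_of_nonneg_left p hL.le
      linarith
    have t2 : σ * (L / 2 * ‖sk‖ ^ 2) ≤ L * σ * C₁ ^ 2 / 2 * D ^ 2 := by
      have p : ‖sk‖ ^ 2 ≤ (C₁ * D) ^ 2 := pow_le_pow_left₀ hsknn hsk 2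
      have q := mul_le_mul_of_nonneg_left p (by positivity : (0:ℝ) ≤ σ * (L / 2))
      nlinarith [q]
    have t3 : lam * ‖sk‖ ≤ Mbar * σ * C₁ * D ^ 2 := by
      have p : lam * ‖sk‖ ≤ (Mbar * (σ * D)) * (C₁ * D) :=
        mul_le_mul hlamD hsk hsknn (by positivity)
      linarith
    linarith [t1, t2, t3]
  -- main inner-product inequality
  have hmain : ‖u‖ ^ 2 ≤ ρ * lam * ‖F xk‖ * D' +
      ((L + Mbar) * σ * C₁ + L * σ * C₁ ^ 2 / 2) * D ^ 2 * D' + ‖u‖ * (L / 2 * D' ^ 2) := by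
    have e1 : ⟪u, J' z⟫ + ⟪u, u - J' z⟫ = ‖u‖ ^ 2 := by
      rw [← inner_add_right, ← real_inner_self_eq_norm_sq]
      congr 1
      abel
    have b2 : ⟪u, u - J' z⟫ ≤ ‖u‖ * (L / 2 * D' ^ 2) := by
      refine (real_inner_le_norm _ _).trans ?_
      exact mul_le_mul_of_nonneg_left h7 (norm_nonneg _)
    have e2 : ⟪u, J' z⟫ = ⟪g, z⟫ + ⟪ContinuousLinearMap.adjoint J' u - g, z⟫ := by
      rw [inner_sub_left, ← ContinuousLinearMap.adjoint_inner_left]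
      ring
    have b3 : ⟪g, z⟫ ≤ ρ * lam * ‖F xk‖ * D' := by
      have h := hineq xb1 (hXsubC hxb1X)
      have hzneg : xb1 - xk1 = -z := by rw [hzdef]; abel
      rw [hzneg, inner_neg_right] at h
      have hnz : ‖-z‖ = D' := by rw [norm_neg]; exact hD'eq.symm
      rw [hnz] at h
      have : -⟪g, z⟫ ≥ -(ρ * lam * ‖F xk‖) * D' := h
      linarith
    have b4 : ⟪ContinuousLinearMap.adjoint J' u - g, z⟫ ≤
        ((L + Mbar) * σ * C₁ + L * σ * C₁ ^ 2 / 2) * D ^ 2 * D' := by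
      refine (real_inner_le_norm _ _).trans ?_
      have hnz : ‖z‖ = D' := hD'eq.symm
      rw [hnz]
      exact mul_le_mul_of_nonneg_right hQ hD'nn
    have b5 : ⟪u, J' z⟫ ≤ ρ * lam * ‖F xk‖ * D' +
        ((L + Mbar) * σ * C₁ + L * σ * C₁ ^ 2 / 2) * D ^ 2 * D' := by
      rw [e2]; exact add_le_add b3 b4
    linarith [e1, b2, b5]
  -- conclude
  clear_value D D' S J J' sk w u z g
  rcases eq_or_lt_of_le hD'nn with hD0 | hD'pos
  · rw [← hD0, mul_zero]
    have hK : 0 ≤ σ ^ 2 * (ρ * Mbar + L / (2 * c)) + L * σ * C₁ ^ 2 / 2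
        + (L + Mbar) * σ * C₁ := by
      have h1 : 0 ≤ ρ * Mbar + L / (2 * c) := by positivity
      have h2 : 0 ≤ σ ^ 2 * (ρ * Mbar + L / (2 * c)) := by positivity
      have h3 : 0 ≤ L * σ * C₁ ^ 2 / 2 := by positivity
      have h4 : 0 ≤ (L + Mbar) * σ * C₁ := by positivity
      linarith
    exact mul_nonneg hK (sq_nonneg D)
  · -- divide hmain by D'
    have hdiv : c * ‖u‖ ≤ ρ * lam * ‖F xk‖ +
        ((L + Mbar) * σ * C₁ + L * σ * C₁ ^ 2 / 2) * D ^ 2 + ‖u‖ * (L / 2) * D' := by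
      have hcu : c * ‖u‖ * D' ≤ ‖u‖ ^ 2 := by
        have := mul_le_mul_of_nonneg_left hEB1 (norm_nonneg u)
        nlinarith [this]
      have hch := hcu.trans hmain
      have h' : (c * ‖u‖) * D' ≤ (ρ * lam * ‖F xk‖ +
          ((L + Mbar) * σ * C₁ + L * σ * C₁ ^ 2 / 2) * D ^ 2 + ‖u‖ * (L / 2) * D') * D' := by
        nlinarith [hch]
      exact le_of_mul_le_mul_right h' hD'pos
    have hD'le : D' ≤ σ * D / c := by
      rw [le_div_iff₀ hc]
      linarith [hEB1, hFk1]
    have hterm3 : ‖u‖ * (L / 2) * D' ≤ σ ^ 2 * (L / (2 * c)) * D ^ 2 := by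
      have h1 : ‖u‖ * (L / 2) * D' ≤ (σ * D) * (L / 2) * (σ * D / c) := by
        have p : ‖u‖ * D' ≤ (σ * D) * (σ * D / c) :=
          mul_le_mul hFk1 hD'le hD'nn (mul_nonneg hσ.le hDnn)
        have q := mul_le_mul_of_nonneg_left p (by positivity : (0:ℝ) ≤ L / 2)
        linarith
      refine h1.trans (le_of_eq ?_)
      field_simp
    have hterm1 : ρ * lam * ‖F xk‖ ≤ σ ^ 2 * (ρ * Mbar) * D ^ 2 := by
      have h1 : lam * ‖F xk‖ ≤ Mbar * ‖F xk‖ * ‖F xk‖ :=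
        mul_le_mul_of_nonneg_right hlamle (norm_nonneg _)
      have h2 : Mbar * ‖F xk‖ * ‖F xk‖ ≤ Mbar * (σ * D) * (σ * D) := by
        have p : ‖F xk‖ * ‖F xk‖ ≤ (σ * D) * (σ * D) :=
          mul_le_mul hFk hFk (norm_nonneg _) (mul_nonneg hσ.le hDnn)
        have q := mul_le_mul_of_nonneg_left p hMbar.le
        linarith
      have h3 : lam * ‖F xk‖ ≤ Mbar * (σ * D) * (σ * D) := le_trans (by linarith) h2
      have q := mul_le_mul_of_nonneg_left h3 hρ
      linarith
    have hfinal : c ^ 2 * D' ≤ c * ‖u‖ := by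
      have := mul_le_mul_of_nonneg_left hEB1 hc.le
      nlinarith [this]
    refine hfinal.trans (hdiv.trans ?_)
    linarith [hterm1, hterm3]
end

section
/- Let X* ⊆ ℝ^d be a nonempty closed set and let dist(x) denote the Euclidean distance from x to X*. Let C₁, C₂, δ₀ > 0 be constants with C₂δ₀ < 1, and let {x_k}_{k≥0} ⊆ ℝ^d be a sequence with dist(x₀) ≤ δ₀ such that for all k ≥ 0: ‖x_{k+1} − x_k‖ ≤ C₁ dist(x_k) and dist(x_{k+1}) ≤ C₂ dist(x_k)². Then {x_k} converges to some point x★ ∈ X*, and moreover ‖x_{k+1} − x★‖ ≤ (C₁C₂/(1 − C₂δ₀)) ‖x_k − x★‖² for all k ≥ 0. -/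
/-- Quadratic convergence of a sequence whose distance to a
nonempty closed set decreases quadratically and whose steps are controlled by
that distance. -/
theorem stmt_16 {d : ℕ}
    (Xstar : Set (EuclideanSpace ℝ (Fin d)))
    (hXstarNe : Xstar.Nonempty) (hXstarClosed : IsClosed Xstar)
    (C₁ C₂ δ₀ : ℝ) (hC₁ : 0 < C₁) (hC₂ : 0 < C₂) (hδ₀ : 0 < δ₀)
    (hsmall : C₂ * δ₀ < 1)
    (x : ℕ → EuclideanSpace ℝ (Fin d))
    (hx0 : Metric.infDist (x 0) Xstar ≤ δ₀)
    (hstep : ∀ k, ‖x (k + 1) - x k‖ ≤ C₁ * Metric.infDist (x k) Xstar)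
    (hquad : ∀ k, Metric.infDist (x (k + 1)) Xstar ≤
      C₂ * Metric.infDist (x k) Xstar ^ 2) :
    ∃ xs ∈ Xstar, Filter.Tendsto x Filter.atTop (nhds xs) ∧
      ∀ k, ‖x (k + 1) - xs‖ ≤
        (C₁ * C₂ / (1 - C₂ * δ₀)) * ‖x k - xs‖ ^ 2 := by
  have hδ0 : ∀ k : ℕ, 0 ≤ Metric.infDist (x k) Xstar := fun k => Metric.infDist_nonneg
  have hq0 : 0 < C₂ * δ₀ := mul_pos hC₂ hδ₀
  have h1q : 0 < 1 - C₂ * δ₀ := by linarith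
  -- distances stay below δ₀
  have hδle : ∀ k, Metric.infDist (x k) Xstar ≤ δ₀ := by
    intro k
    induction k with
    | zero => exact hx0
    | succ n ih =>
      have h := hquad n
      have h0 := hδ0 n
      nlinarith
  -- contraction
  have hcontr : ∀ k, Metric.infDist (x (k + 1)) Xstar ≤
      (C₂ * δ₀) * Metric.infDist (x k) Xstar := by
    intro k
    have h := hquad k
    have h0 := hδ0 k
    have h1 := hδle k
    nlinarith [mul_nonneg (mul_nonneg hC₂.le h0) (sub_nonneg.2 h1)]
  have hgeo : ∀ k, Metric.infDist (x k) Xstar ≤ δ₀ * (C₂ * δ₀) ^ k := by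
    intro k
    induction k with
    | zero => simpa using hδle 0
    | succ n ih =>
      calc Metric.infDist (x (n + 1)) Xstar
          ≤ (C₂ * δ₀) * Metric.infDist (x n) Xstar := hcontr n
        _ ≤ (C₂ * δ₀) * (δ₀ * (C₂ * δ₀) ^ n) := by nlinarith
        _ = δ₀ * (C₂ * δ₀) ^ (n + 1) := by ring
  have hshift : ∀ n m : ℕ, Metric.infDist (x (n + m)) Xstar ≤
      (C₂ * δ₀) ^ m * Metric.infDist (x n) Xstar := by
    intro n m
    induction m with
    | zero => simp
    | succ m ih =>
      have h1 := hcontr (n + m)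
      have h2 : (0:ℝ) < (C₂ * δ₀) := hq0
      calc Metric.infDist (x (n + (m + 1))) Xstar
          = Metric.infDist (x (n + m + 1)) Xstar := rfl
        _ ≤ (C₂ * δ₀) * Metric.infDist (x (n + m)) Xstar := hcontr (n + m)
        _ ≤ (C₂ * δ₀) * ((C₂ * δ₀) ^ m * Metric.infDist (x n) Xstar) := by nlinarith
        _ = (C₂ * δ₀) ^ (m + 1) * Metric.infDist (x n) Xstar := by ring
  -- partial sums
  have hsum : ∀ n m : ℕ, ‖x (n + m) - x n‖ ≤
      C₁ * Metric.infDist (x n) Xstar * ∑ i ∈ Finset.range m, (C₂ * δ₀) ^ i := by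
    intro n m
    induction m with
    | zero => simp
    | succ m ih =>
      have h1 : ‖x (n + (m + 1)) - x n‖ ≤
          ‖x (n + m + 1) - x (n + m)‖ + ‖x (n + m) - x n‖ := by
        have he : x (n + (m + 1)) - x n = (x (n + m + 1) - x (n + m)) + (x (n + m) - x n) := by
          show x (n + m + 1) - x n = _
          abel
        rw [he]; exact norm_add_le _ _
      have h2 : ‖x (n + m + 1) - x (n + m)‖ ≤
          C₁ * ((C₂ * δ₀) ^ m * Metric.infDist (x n) Xstar) := by
        calc ‖x (n + m + 1) - x (n + m)‖ ≤ C₁ * Metric.infDist (x (n + m)) Xstar :=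
              hstep (n + m)
          _ ≤ C₁ * ((C₂ * δ₀) ^ m * Metric.infDist (x n) Xstar) := by
              have := hshift n m
              nlinarith
      calc ‖x (n + (m + 1)) - x n‖
          ≤ C₁ * ((C₂ * δ₀) ^ m * Metric.infDist (x n) Xstar) +
            C₁ * Metric.infDist (x n) Xstar * ∑ i ∈ Finset.range m, (C₂ * δ₀) ^ i := by
            linarith
        _ = C₁ * Metric.infDist (x n) Xstar *
            ∑ i ∈ Finset.range (m + 1), (C₂ * δ₀) ^ i := by
            rw [Finset.sum_range_succ]; ring
  have hgeosum : ∀ m : ℕ, (∑ i ∈ Finset.range m, (C₂ * δ₀) ^ i) ≤ (1 - C₂ * δ₀)⁻¹ := by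
    intro m
    have hpow : (0:ℝ) ≤ (C₂ * δ₀) ^ m := pow_nonneg hq0.le m
    calc (∑ i ∈ Finset.range m, (C₂ * δ₀) ^ i)
        = (1 - (C₂ * δ₀) ^ m) / (1 - C₂ * δ₀) := by
          rw [geom_sum_eq (by linarith : (C₂ * δ₀) ≠ 1)]
          rw [div_eq_div_iff (by linarith) (by linarith)]
          ring
      _ ≤ (1 - C₂ * δ₀)⁻¹ := by
          rw [div_le_iff₀ h1q, inv_mul_cancel₀ (ne_of_gt h1q)]
          linarith
  have hsum' : ∀ n m : ℕ, ‖x (n + m) - x n‖ ≤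
      C₁ * Metric.infDist (x n) Xstar * (1 - C₂ * δ₀)⁻¹ := by
    intro n m
    calc ‖x (n + m) - x n‖
        ≤ C₁ * Metric.infDist (x n) Xstar * ∑ i ∈ Finset.range m, (C₂ * δ₀) ^ i := hsum n m
      _ ≤ C₁ * Metric.infDist (x n) Xstar * (1 - C₂ * δ₀)⁻¹ := by
          have := hgeosum m
          have h0 : 0 ≤ C₁ * Metric.infDist (x n) Xstar := mul_nonneg hC₁.le (hδ0 n)
          nlinarith
  -- Cauchy
  have hcauchy : CauchySeq x := by
    apply cauchySeq_of_le_geometric (C₂ * δ₀) (C₁ * δ₀) hsmall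
    intro n
    rw [dist_eq_norm, norm_sub_rev]
    calc ‖x (n + 1) - x n‖ ≤ C₁ * Metric.infDist (x n) Xstar := hstep n
      _ ≤ C₁ * δ₀ * (C₂ * δ₀) ^ n := by
          have := hgeo n
          have hpow : (0:ℝ) ≤ (C₂ * δ₀) ^ n := pow_nonneg hq0.le n
          nlinarith
  obtain ⟨xs, hxs⟩ := cauchySeq_tendsto_of_complete hcauchy
  have hδtend : Filter.Tendsto (fun k => Metric.infDist (x k) Xstar) Filter.atTop (nhds 0) := by
    have h1 : Filter.Tendsto (fun k : ℕ => δ₀ * (C₂ * δ₀) ^ k) Filter.atTop (nhds 0) := by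
      have := tendsto_pow_atTop_nhds_zero_of_lt_one hq0.le hsmall
      simpa using this.const_mul δ₀
    exact squeeze_zero hδ0 hgeo h1
  have hxsmem : xs ∈ Xstar := by
    have hcont : Filter.Tendsto (fun k => Metric.infDist (x k) Xstar) Filter.atTop
        (nhds (Metric.infDist xs Xstar)) :=
      ((Metric.continuous_infDist_pt Xstar).tendsto xs).comp hxs
    exact (hXstarClosed.mem_iff_infDist_zero hXstarNe).2 (tendsto_nhds_unique hcont hδtend)
  refine ⟨xs, hxsmem, hxs, ?_⟩
  have htail : ∀ n, ‖x n - xs‖ ≤ C₁ * Metric.infDist (x n) Xstar * (1 - C₂ * δ₀)⁻¹ := by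
    intro n
    have hlim : Filter.Tendsto (fun m => ‖x (n + m) - x n‖) Filter.atTop
        (nhds ‖xs - x n‖) := by
      have ht : Filter.Tendsto (fun m : ℕ => x (n + m)) Filter.atTop (nhds xs) := by
        have := hxs.comp (Filter.tendsto_add_atTop_nat n)
        simpa [Function.comp_def, Nat.add_comm] using this
      exact (ht.sub_const (x n)).norm
    have := le_of_tendsto hlim (Filter.Eventually.of_forall (fun m => hsum' n m))
    rwa [norm_sub_rev] at this
  intro k
  have hkxs : Metric.infDist (x k) Xstar ≤ ‖x k - xs‖ := by
    have := Metric.infDist_le_dist_of_mem (x := x k) hxsmem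
    rwa [dist_eq_norm] at this
  have h1 := htail (k + 1)
  have h2 := hquad k
  have h0 := hδ0 k
  have hinv : (0:ℝ) ≤ (1 - C₂ * δ₀)⁻¹ := inv_nonneg.2 h1q.le
  have hsq : Metric.infDist (x k) Xstar ^ 2 ≤ ‖x k - xs‖ ^ 2 := by nlinarith
  calc ‖x (k + 1) - xs‖
      ≤ C₁ * Metric.infDist (x (k + 1)) Xstar * (1 - C₂ * δ₀)⁻¹ := h1
    _ ≤ C₁ * (C₂ * Metric.infDist (x k) Xstar ^ 2) * (1 - C₂ * δ₀)⁻¹ :=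
        mul_le_mul_of_nonneg_right (mul_le_mul_of_nonneg_left h2 hC₁.le) hinv
    _ ≤ C₁ * (C₂ * ‖x k - xs‖ ^ 2) * (1 - C₂ * δ₀)⁻¹ :=
        mul_le_mul_of_nonneg_right (mul_le_mul_of_nonneg_left
          (mul_le_mul_of_nonneg_left hsq hC₂.le) hC₁.le) hinv
    _ = C₁ * C₂ / (1 - C₂ * δ₀) * ‖x k - xs‖ ^ 2 := by
        rw [div_eq_mul_inv]; ring
end

section
/- Let x ∈ C and ε > 0. Then the following are equivalent: (i) there exists g ∈ ℝ^d with ⟨g, y − x⟩ ≤ 0 for all y ∈ C (i.e., g lies in the normal cone of C at x) and ‖∇f(x) + g‖ ≤ ε; (ii) ⟨∇f(x), y − x⟩ ≥ −ε‖y − x‖ for all y ∈ C. -/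
open scoped RealInnerProductSpace

private lemma key {d : ℕ} (C : Set (EuclideanSpace ℝ (Fin d)))
    (hCconvex : Convex ℝ C)
    (x : EuclideanSpace ℝ (Fin d)) (hx : x ∈ C)
    (ε : ℝ) (hε : 0 < ε) (v : EuclideanSpace ℝ (Fin d))
    (hvi : ∀ y ∈ C, ⟪v, y - x⟫ ≥ -ε * ‖y - x‖) :
    ∃ g : EuclideanSpace ℝ (Fin d),
      (∀ y ∈ C, ⟪g, y - x⟫ ≤ 0) ∧ ‖v + g‖ ≤ ε := by
  set S : Set (EuclideanSpace ℝ (Fin d)) := {w | ∃ t : ℝ, 0 ≤ t ∧ ∃ y ∈ C, w = t • (y - x)} with hS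
  have hSconv : Convex ℝ S := by
    rintro w1 ⟨t1, ht1, y1, hy1, rfl⟩ w2 ⟨t2, ht2, y2, hy2, rfl⟩ a b ha hb hab
    by_cases hs : a * t1 + b * t2 = 0
    · have h1 : a * t1 = 0 := by nlinarith [mul_nonneg ha ht1, mul_nonneg hb ht2]
      have h2 : b * t2 = 0 := by nlinarith [mul_nonneg ha ht1, mul_nonneg hb ht2]
      have : a • t1 • (y1 - x) + b • t2 • (y2 - x) = 0 := by
        rw [smul_smul, smul_smul, h1, h2]; simp
      rw [this]
      exact ⟨0, le_refl 0, x, hx, by simp⟩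
    · set s := a * t1 + b * t2 with hsdef
      have hs0 : 0 < s := lt_of_le_of_ne (by positivity) (Ne.symm hs)
      refine ⟨s, le_of_lt hs0, (a * t1 / s) • y1 + (b * t2 / s) • y2,
        hCconvex hy1 hy2 (by positivity) (by positivity) (by field_simp; exact hsdef.symm), ?_⟩
      have hss : s ≠ 0 := ne_of_gt hs0
      match_scalars <;> field_simp <;> rw [hsdef] <;> ring
  set K := closure S with hK
  have hKconv : Convex ℝ K := hSconv.closure
  have hKne : K.Nonempty := ⟨(1:ℝ) • (x - x), subset_closure ⟨1, zero_le_one, x, hx, rfl⟩⟩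
  have hKcone : ∀ t : ℝ, 0 ≤ t → ∀ w ∈ K, t • w ∈ K := by
    intro t ht w hw
    have hmap : (t • ·) '' S ⊆ S := by
      rintro _ ⟨_, ⟨t', ht', y, hy, rfl⟩, rfl⟩
      exact ⟨t * t', mul_nonneg ht ht', y, hy, by dsimp only; rw [smul_smul]⟩
    have hc : Continuous (t • · : EuclideanSpace ℝ (Fin d) → EuclideanSpace ℝ (Fin d)) :=
      continuous_const_smul t
    have : (t • ·) '' closure S ⊆ closure S :=
      (image_closure_subset_closure_image hc).trans (closure_mono hmap)
    exact this ⟨w, hw, rfl⟩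
  -- project u := -v onto K
  obtain ⟨p, hpK, hpmin⟩ := exists_norm_eq_iInf_of_complete_convex hKne
    (isClosed_closure.isComplete) hKconv (-v)
  have hchar : ∀ w ∈ K, ⟪-v - p, w - p⟫ ≤ 0 :=
    (norm_eq_iInf_iff_real_inner_le_zero hKconv hpK).mp hpmin
  have hp2 : ⟪-v - p, p⟫ = 0 := by
    have h1 := hchar ((2:ℝ) • p) (hKcone 2 (by norm_num) p hpK)
    have h2 := hchar ((1/2 : ℝ) • p) (hKcone (1/2) (by norm_num) p hpK)
    have e1 : (2:ℝ) • p - p = p := by module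
    have e2 : (1/2:ℝ) • p - p = -((1/2:ℝ) • p) := by module
    rw [e1] at h1
    rw [e2, inner_neg_right, inner_smul_right] at h2
    linarith
  have hK0 : ∀ w ∈ K, ⟪-v - p, w⟫ ≤ 0 := by
    intro w hw
    have := hchar w hw
    rw [inner_sub_right] at this
    linarith [hp2]
  -- bound ‖p‖
  have hclosedset : ∀ w ∈ K, ⟪v, w⟫ ≥ -ε * ‖w‖ := by
    have hSsub : S ⊆ {w : EuclideanSpace ℝ (Fin d) | -ε * ‖w‖ - ⟪v, w⟫ ≤ 0} := by
      rintro _ ⟨t, ht, y, hy, rfl⟩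
      have := hvi y hy
      simp only [Set.mem_setOf_eq, inner_smul_right, norm_smul, Real.norm_eq_abs,
        abs_of_nonneg ht]
      nlinarith
    have hcl : IsClosed {w : EuclideanSpace ℝ (Fin d) | -ε * ‖w‖ - ⟪v, w⟫ ≤ 0} := by
      apply isClosed_le _ continuous_const
      exact (continuous_const.mul continuous_norm).sub
        (continuous_const.inner continuous_id)
    intro w hw
    have := (hcl.closure_subset_iff.mpr hSsub) hw
    simp only [Set.mem_setOf_eq] at this
    linarith
  have hvp : ⟪v, p⟫ = -‖p‖^2 := by
    have := hp2
    rw [inner_sub_left, inner_neg_left, real_inner_self_eq_norm_sq] at this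
    linarith
  have hpnorm : ‖p‖ ≤ ε := by
    have h := hclosedset p hpK
    rw [hvp] at h
    by_cases hp0 : ‖p‖ = 0
    · rw [hp0]; linarith
    · have : 0 < ‖p‖ := lt_of_le_of_ne (norm_nonneg p) (Ne.symm hp0)
      nlinarith
  refine ⟨-v - p, fun y hy => hK0 _ (subset_closure ⟨1, zero_le_one, y, hy, by simp⟩), ?_⟩
  have : v + (-v - p) = -p := by module
  rw [this, norm_neg]
  exact hpnorm

/-- Equivalence of the two definitions of an ε-stationary point
of min_{x ∈ C} f(x): existence of a normal-cone element g with ‖∇f(x) + g‖ ≤ ε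
versus the variational inequality ⟪∇f(x), y − x⟫ ≥ −ε‖y − x‖ on C. -/
theorem stmt_19 {d n : ℕ}
    (F : EuclideanSpace ℝ (Fin d) → EuclideanSpace ℝ (Fin n))
    (hF : ContDiff ℝ 1 F)
    (C : Set (EuclideanSpace ℝ (Fin d)))
    (hCne : C.Nonempty) (hCclosed : IsClosed C) (hCconvex : Convex ℝ C)
    (x : EuclideanSpace ℝ (Fin d)) (hx : x ∈ C)
    (ε : ℝ) (hε : 0 < ε) :
    (∃ g : EuclideanSpace ℝ (Fin d),
      (∀ y ∈ C, ⟪g, y - x⟫ ≤ 0) ∧ ‖gradf F x + g‖ ≤ ε) ↔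
    (∀ y ∈ C, ⟪gradf F x, y - x⟫ ≥ -ε * ‖y - x‖) := by
  constructor
  · rintro ⟨g, hg, hnorm⟩ y hy
    have h1 : ⟪gradf F x + g, y - x⟫ ≥ -(‖gradf F x + g‖ * ‖y - x‖) := by
      have := abs_real_inner_le_norm (gradf F x + g) (y - x)
      have := neg_abs_le (⟪gradf F x + g, y - x⟫)
      linarith
    have h2 : ⟪gradf F x, y - x⟫ = ⟪gradf F x + g, y - x⟫ - ⟪g, y - x⟫ := by
      rw [inner_add_left]; ring
    have h3 : ‖gradf F x + g‖ * ‖y - x‖ ≤ ε * ‖y - x‖ :=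
      mul_le_mul_of_nonneg_right hnorm (norm_nonneg _)
    have := hg y hy
    rw [h2]
    nlinarith
  · exact key C hCconvex x hx ε hε (gradf F x)
end
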